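/- arXiv:2512.02663 — 6 statements merged into one kernel-verified Lean document; each statement's English description precedes it below -/
import Mathlib

section
/- There exists a universal constant c > 0 such that for all integers n, k ≥ 1 with k ≥ n, every integer t with 1 ≤ t ≤ c·n·k, and X_1, ..., X_t i.i.d. uniform on {1, ..., n}, the probability that (X_1, ..., X_t) contains a non-increasing subsequence of length k is at most (16 t / (n k))^{k/2}. -/
open MeasureTheory ProbabilityTheory Filter

open scoped Classical
open Finset

-- two strictly monotone functions from Fin k with same image are equal
lemma auxSM {α : Type*} [LinearOrder α] {k : ℕ} {f g : Fin k → α}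
    (hf : StrictMono f) (hg : StrictMono g)
    (h : Finset.image f Finset.univ = Finset.image g Finset.univ) : f = g := by
  have hcard : (Finset.image f Finset.univ).card = k := by
    rw [Finset.card_image_of_injective _ hf.injective, Finset.card_univ, Fintype.card_fin]
  have h1 := Finset.orderEmbOfFin_unique hcard
    (fun x => Finset.mem_image_of_mem f (Finset.mem_univ x)) hf
  have h2 := Finset.orderEmbOfFin_unique hcard
    (fun x => h ▸ Finset.mem_image_of_mem g (Finset.mem_univ x)) hg
  rw [show f = fun x => f x from rfl, h1, h2]

lemma auxCardS (k t : ℕ) :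
    (Finset.univ.filter (fun f : Fin k → Fin t => StrictMono f)).card ≤ t.choose k := by
  have := Finset.card_le_card_of_injOn (fun f : Fin k → Fin t => Finset.image f Finset.univ)
    (s := Finset.univ.filter (fun f : Fin k → Fin t => StrictMono f))
    (t := Finset.powersetCard k (Finset.univ : Finset (Fin t)))
    (fun f hf => by
      rw [Finset.mem_coe, Finset.mem_filter] at hf
      rw [Finset.mem_coe, Finset.mem_powersetCard]
      exact ⟨Finset.subset_univ _, by
        rw [Finset.card_image_of_injective _ hf.2.injective, Finset.card_univ,
          Fintype.card_fin]⟩)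
    (fun f hf g hg hfg => by
      rw [Finset.mem_coe, Finset.mem_filter] at hf hg
      refine auxSM hf.2 hg.2 ?_
      ext x
      simpa [Finset.mem_image] using Finset.ext_iff.mp hfg x)
  rwa [Finset.card_powersetCard, Finset.card_univ, Fintype.card_fin] at this

lemma auxCardM (n k : ℕ) (hk : 1 ≤ k) :
    ((Fintype.piFinset fun _ : Fin k => Finset.Icc 1 n).filter
      (fun m : Fin k → ℕ => Antitone m)).card ≤ 2 ^ (n + k - 1) := by
  set S := (Fintype.piFinset fun _ : Fin k => Finset.Icc 1 n).filter
      (fun m : Fin k → ℕ => Antitone m) with hS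
  set ψ : (Fin k → ℕ) → (Fin k → ℕ) :=
    fun m j => m j.rev + (k - 1 - (j.rev : ℕ)) with hψ
  have hrange : ∀ j : Fin k, (j.rev : ℕ) ≤ k - 1 := fun j => Nat.le_sub_one_of_lt j.rev.isLt
  have hmono : ∀ m : Fin k → ℕ, Antitone m → StrictMono (ψ m) := by
    intro m hm j j' hjj
    have h1 : j'.rev < j.rev := Fin.rev_lt_rev.mpr hjj
    have h2 : m j.rev ≤ m j'.rev := hm h1.le
    have h3 : (k - 1 - (j.rev : ℕ)) < (k - 1 - (j'.rev : ℕ)) := by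
      have := hrange j
      have := Fin.lt_def.mp h1
      omega
    simp only [ψ]
    omega
  have hsub : ∀ m ∈ S, Finset.image (ψ m) Finset.univ ∈ (Finset.Icc 1 (n + k - 1)).powerset := by
    intro m hm
    rw [hS, Finset.mem_filter, Fintype.mem_piFinset] at hm
    rw [Finset.mem_powerset]
    intro x hx
    rw [Finset.mem_image] at hx
    obtain ⟨j, _, rfl⟩ := hx
    have h1 := hm.1 j.rev
    rw [Finset.mem_Icc] at h1 ⊢
    have := hrange j
    constructor <;> simp only [ψ] <;> omega
  have hinj : Set.InjOn (fun m : Fin k → ℕ => Finset.image (ψ m) Finset.univ) S := by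
    intro m1 hm1 m2 hm2 heq
    rw [Finset.mem_coe, hS, Finset.mem_filter] at hm1 hm2
    have hψeq : ψ m1 = ψ m2 := by
      refine auxSM (hmono _ hm1.2) (hmono _ hm2.2) ?_
      ext x
      simpa [Finset.mem_image] using Finset.ext_iff.mp heq x
    funext j
    have := congrFun hψeq j.rev
    simp only [ψ, Fin.rev_rev] at this
    omega
  calc S.card ≤ (Finset.Icc 1 (n + k - 1)).powerset.card :=
        Finset.card_le_card_of_injOn _ hsub hinj
    _ = 2 ^ (n + k - 1) := by rw [Finset.card_powerset, Nat.card_Icc]; simp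

lemma auxFac (k : ℕ) : ((k : ℝ)) ^ k ≤ (k.factorial : ℝ) * Real.exp 1 ^ k := by
  have hsum := Real.sum_le_exp_of_nonneg (x := (k : ℝ)) (Nat.cast_nonneg k) (k + 1)
  have hterm : (k : ℝ) ^ k / k.factorial ≤ ∑ i ∈ Finset.range (k + 1), (k : ℝ) ^ i / i.factorial :=
    Finset.single_le_sum (f := fun i => (k : ℝ) ^ i / i.factorial)
      (fun i _ => by positivity) (Finset.self_mem_range_succ k)
  have h1 : (k : ℝ) ^ k / k.factorial ≤ Real.exp k := hterm.trans hsum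
  have h2 : Real.exp (k : ℝ) = Real.exp 1 ^ k := by
    rw [← Real.exp_nat_mul, mul_one]
  have hfac : (0 : ℝ) < k.factorial := by positivity
  rw [div_le_iff₀ hfac] at h1
  rw [h2] at h1
  linarith [h1]

lemma auxChoose (t k : ℕ) : (t.choose k : ℝ) * (k : ℝ) ^ k ≤ (Real.exp 1 * t) ^ k := by
  have h1 : (t.choose k : ℝ) * k.factorial ≤ (t : ℝ) ^ k := by
    have := Nat.descFactorial_le_pow t k
    rw [Nat.descFactorial_eq_factorial_mul_choose] at this
    have h := (Nat.cast_le (α := ℝ)).mpr this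
    push_cast at h
    linarith
  calc (t.choose k : ℝ) * (k : ℝ) ^ k
      ≤ (t.choose k : ℝ) * ((k.factorial : ℝ) * Real.exp 1 ^ k) := by
        exact mul_le_mul_of_nonneg_left (auxFac k) (Nat.cast_nonneg _)
    _ = ((t.choose k : ℝ) * k.factorial) * Real.exp 1 ^ k := by ring
    _ ≤ (t : ℝ) ^ k * Real.exp 1 ^ k := by
        exact mul_le_mul_of_nonneg_right h1 (by positivity)
    _ = (Real.exp 1 * t) ^ k := by rw [← mul_pow]; ring_nf

/-- There is a universal constant `c > 0` such that for all integers
`n, k ≥ 1` with `k ≥ n`, every integer `t` with `1 ≤ t ≤ c·n·k`, and `X_1, …, X_t` i.i.d.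
uniform on `{1, …, n}`, the probability that `(X_1, …, X_t)` contains a non-increasing
subsequence of length `k` is at most `(16t/(nk))^{k/2}`. -/
theorem nonincreasing_subsequence_prob_upper_bound_large_k :
    ∃ c : ℝ, 0 < c ∧
      ∀ (n k : ℕ), 1 ≤ n → 1 ≤ k → n ≤ k →
      ∀ t : ℕ, 1 ≤ t → (t : ℝ) ≤ c * n * k →
      ∀ (Ω : Type) (_ : MeasureSpace Ω) (_ : IsProbabilityMeasure (ℙ : Measure Ω))
        (X : Fin t → Ω → ℕ), (∀ i, Measurable (X i)) →
        iIndepFun X ℙ →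
        (∀ i m, ℙ {ω | X i ω = m} =
          if m ∈ Finset.Icc 1 n then ((n : ENNReal))⁻¹ else 0) →
        (ℙ {ω | ∃ ι : Fin k → Fin t, StrictMono ι ∧
            Antitone (fun a => X (ι a) ω)}).toReal ≤
          (16 * (t : ℝ) / ((n : ℝ) * k)) ^ ((k : ℝ) / 2) := by
  classical
  refine ⟨1/8, by norm_num, ?_⟩
  intro n k hn hk hnk t ht hct Ω _ hprob X hmeas hindep hX
  set S : Finset (Fin k → Fin t) :=
    Finset.univ.filter (fun f : Fin k → Fin t => StrictMono f) with hSdef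
  set M : Finset (Fin k → ℕ) :=
    (Fintype.piFinset fun _ : Fin k => Finset.Icc 1 n).filter
      (fun m : Fin k → ℕ => Antitone m) with hMdef
  set N : Set Ω := ⋃ i : Fin t, ⋃ v : {v : ℕ // v ∉ Finset.Icc 1 n}, X i ⁻¹' {(v : ℕ)} with hNdef
  have hpre : ∀ (i : Fin t) (v : ℕ), X i ⁻¹' {v} = {ω | X i ω = v} := fun i v => rfl
  have hN : ℙ N = 0 := by
    refine measure_iUnion_null fun i => measure_iUnion_null fun v => ?_
    rw [hpre, hX i v, if_neg v.2]
  -- probability of each basic event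
  have hB : ∀ ι : Fin k → Fin t, StrictMono ι → ∀ m : Fin k → ℕ, m ∈ M →
      ℙ (⋂ j : Fin k, X (ι j) ⁻¹' {m j}) = ((n : ENNReal))⁻¹ ^ k := by
    intro ι hι m hm
    have hinj := hι.injective
    rw [hMdef, Finset.mem_filter, Fintype.mem_piFinset] at hm
    set sets : Fin t → Set ℕ := fun i => if h : ∃ j, ι j = i then {m h.choose} else Set.univ
      with hsets
    have hset_eq : ∀ j, sets (ι j) = {m j} := by
      intro j
      have h : ∃ j', ι j' = ι j := ⟨j, rfl⟩
      simp only [hsets, dif_pos h]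
      exact congrArg (fun x => ({x} : Set ℕ)) (congrArg m (hinj h.choose_spec))
    have hmeas' : ∀ i, i ∈ Finset.image ι Finset.univ → MeasurableSet (sets i) := by
      intro i _
      by_cases h : ∃ j, ι j = i
      · simp only [hsets, dif_pos h]; exact measurableSet_singleton _
      · simp only [hsets, dif_neg h]; exact MeasurableSet.univ
    have hkey := hindep.measure_inter_preimage_eq_mul (Finset.image ι Finset.univ)
      (sets := sets) hmeas'
    have hint : (⋂ i ∈ Finset.image ι Finset.univ, X i ⁻¹' sets i)
        = ⋂ j : Fin k, X (ι j) ⁻¹' {m j} := by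
      ext ω
      simp only [Set.mem_iInter, Finset.mem_image, Finset.mem_univ, true_and]
      constructor
      · intro h j
        have := h (ι j) ⟨j, rfl⟩
        rwa [hset_eq j] at this
      · rintro h i ⟨j, rfl⟩
        rw [hset_eq j]; exact h j
    have hprod : ∏ i ∈ Finset.image ι Finset.univ, ℙ (X i ⁻¹' sets i)
        = ((n : ENNReal))⁻¹ ^ k := by
      rw [Finset.prod_image (fun a _ b _ hab => hinj hab)]
      have hval : ∀ j : Fin k, ℙ (X (ι j) ⁻¹' sets (ι j)) = ((n : ENNReal))⁻¹ := by
        intro j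
        rw [hset_eq j, hpre, hX (ι j) (m j), if_pos (hm.1 j)]
      rw [Finset.prod_congr rfl (fun j _ => hval j), Finset.prod_const, Finset.card_univ,
        Fintype.card_fin]
    rw [hint, hprod] at hkey
    exact hkey
  -- inclusion
  have hsub : {ω | ∃ ι : Fin k → Fin t, StrictMono ι ∧ Antitone (fun a => X (ι a) ω)} ⊆
      N ∪ ⋃ ι ∈ S, ⋃ m ∈ M, ⋂ j : Fin k, X (ι j) ⁻¹' {m j} := by
    rintro ω ⟨ι, hι, hanti⟩
    by_cases hgood : ∀ j : Fin k, X (ι j) ω ∈ Finset.Icc 1 n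
    · right
      simp only [Set.mem_iUnion]
      refine ⟨ι, Finset.mem_filter.mpr ⟨Finset.mem_univ _, hι⟩, fun j => X (ι j) ω,
        Finset.mem_filter.mpr ⟨Fintype.mem_piFinset.mpr hgood, hanti⟩, ?_⟩
      exact Set.mem_iInter.mpr fun j => rfl
    · left
      push_neg at hgood
      obtain ⟨j, hj⟩ := hgood
      exact Set.mem_iUnion.mpr ⟨ι j, Set.mem_iUnion.mpr ⟨⟨X (ι j) ω, hj⟩, rfl⟩⟩
  -- union bound
  have hEb : ℙ {ω | ∃ ι : Fin k → Fin t, StrictMono ι ∧ Antitone (fun a => X (ι a) ω)} ≤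
      (S.card : ENNReal) * (M.card : ENNReal) * ((n : ENNReal))⁻¹ ^ k := by
    calc ℙ {ω | ∃ ι : Fin k → Fin t, StrictMono ι ∧ Antitone (fun a => X (ι a) ω)}
        ≤ ℙ (N ∪ ⋃ ι ∈ S, ⋃ m ∈ M, ⋂ j : Fin k, X (ι j) ⁻¹' {m j}) := measure_mono hsub
      _ ≤ ℙ N + ℙ (⋃ ι ∈ S, ⋃ m ∈ M, ⋂ j : Fin k, X (ι j) ⁻¹' {m j}) := measure_union_le _ _
      _ = ℙ (⋃ ι ∈ S, ⋃ m ∈ M, ⋂ j : Fin k, X (ι j) ⁻¹' {m j}) := by rw [hN, zero_add]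
      _ ≤ ∑ ι ∈ S, ℙ (⋃ m ∈ M, ⋂ j : Fin k, X (ι j) ⁻¹' {m j}) := measure_biUnion_finset_le _ _
      _ ≤ ∑ ι ∈ S, ∑ m ∈ M, ℙ (⋂ j : Fin k, X (ι j) ⁻¹' {m j}) :=
          Finset.sum_le_sum fun ι _ => measure_biUnion_finset_le _ _
      _ = ∑ ι ∈ S, ∑ m ∈ M, ((n : ENNReal))⁻¹ ^ k := by
          refine Finset.sum_congr rfl fun ι hι => Finset.sum_congr rfl fun m hm => ?_
          exact hB ι (Finset.mem_filter.mp hι).2 m hm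
      _ = (S.card : ENNReal) * (M.card : ENNReal) * ((n : ENNReal))⁻¹ ^ k := by
          simp [Finset.sum_const, nsmul_eq_mul, mul_assoc]
  have hnne : (n : ENNReal) ≠ 0 := by
    simp only [ne_eq, Nat.cast_eq_zero]; omega
  have hfin : (S.card : ENNReal) * (M.card : ENNReal) * ((n : ENNReal))⁻¹ ^ k ≠ ⊤ := by
    refine ENNReal.mul_ne_top (ENNReal.mul_ne_top (ENNReal.natCast_ne_top _)
      (ENNReal.natCast_ne_top _)) ?_
    exact ENNReal.pow_ne_top (ENNReal.inv_ne_top.mpr hnne)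
  have htr : (ℙ {ω | ∃ ι : Fin k → Fin t, StrictMono ι ∧
      Antitone (fun a => X (ι a) ω)}).toReal ≤
      (S.card : ℝ) * (M.card : ℝ) * ((n : ℝ))⁻¹ ^ k := by
    have h1 := ENNReal.toReal_mono hfin hEb
    simpa using h1
  -- numeric part
  set e : ℝ := Real.exp 1 with hedef
  have hepos : (0 : ℝ) < e := Real.exp_pos 1
  have hnpos : (0 : ℝ) < n := by exact_mod_cast hn
  have hkpos : (0 : ℝ) < k := by exact_mod_cast hk
  have htpos : (0 : ℝ) < t := by exact_mod_cast ht
  have hA1 : (S.card : ℝ) * (k : ℝ) ^ k ≤ (e * t) ^ k := by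
    refine le_trans ?_ (auxChoose t k)
    have := auxCardS k t
    exact mul_le_mul_of_nonneg_right (by exact_mod_cast this) (by positivity)
  have hA2 : (M.card : ℝ) ≤ 4 ^ k := by
    have h1 : M.card ≤ 2 ^ (n + k - 1) := auxCardM n k hk
    have h2 : (2 : ℕ) ^ (n + k - 1) ≤ 2 ^ (2 * k) := Nat.pow_le_pow_right (by norm_num) (by omega)
    have h3 : (2 : ℕ) ^ (2 * k) = 4 ^ k := by rw [pow_mul]; norm_num
    exact_mod_cast (h1.trans h2).trans_eq h3
  have hkey1 : (S.card : ℝ) * (M.card : ℝ) * ((n : ℝ))⁻¹ ^ k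
      ≤ (4 * e * (t : ℝ) / ((n : ℝ) * k)) ^ k := by
    rw [div_pow, le_div_iff₀ (by positivity)]
    have hsimp : ((n : ℝ))⁻¹ ^ k * ((n : ℝ) * k) ^ k = (k : ℝ) ^ k := by
      rw [mul_pow, ← mul_assoc, ← mul_pow, inv_mul_cancel₀ (ne_of_gt hnpos), one_pow, one_mul]
    calc (S.card : ℝ) * (M.card : ℝ) * ((n : ℝ))⁻¹ ^ k * ((n : ℝ) * k) ^ k
        = ((S.card : ℝ) * (k : ℝ) ^ k) * (M.card : ℝ) := by
          rw [mul_assoc ((S.card : ℝ) * (M.card : ℝ)), hsimp]; ring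
      _ ≤ (e * t) ^ k * 4 ^ k := by
          exact mul_le_mul hA1 hA2 (Nat.cast_nonneg _) (by positivity)
      _ = (4 * e * (t : ℝ)) ^ k := by rw [← mul_pow]; ring_nf
  -- rpow step
  set b : ℝ := 4 * e * (t : ℝ) / ((n : ℝ) * k) with hbdef
  set a : ℝ := 16 * (t : ℝ) / ((n : ℝ) * k) with hadef
  have hbpos : 0 < b := by positivity
  have he2 : e ^ 2 ≤ 8 := by
    have := Real.exp_one_lt_d9
    nlinarith [Real.exp_pos 1]
  have ht8 : 8 * (t : ℝ) ≤ (n : ℝ) * k := by nlinarith [hct]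
  have hb2a : b ^ 2 ≤ a := by
    rw [hbdef, hadef, div_pow, div_le_div_iff₀ (by positivity) (by positivity)]
    have hkey : e ^ 2 * (t : ℝ) ≤ (n : ℝ) * k := by nlinarith
    nlinarith [mul_le_mul_of_nonneg_right hkey
      (show (0 : ℝ) ≤ 16 * (t : ℝ) * ((n : ℝ) * k) by positivity)]
  have hrpow : b ^ k ≤ a ^ ((k : ℝ) / 2) := by
    have h1 : (b ^ 2 : ℝ) ^ ((k : ℝ) / 2) ≤ a ^ ((k : ℝ) / 2) :=
      Real.rpow_le_rpow (by positivity) hb2a (by positivity)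
    have h2 : (b ^ 2 : ℝ) ^ ((k : ℝ) / 2) = b ^ (k : ℝ) := by
      rw [← Real.rpow_natCast b 2, ← Real.rpow_mul hbpos.le]
      congr 1
      push_cast
      ring
    have h3 : b ^ (k : ℝ) = b ^ k := Real.rpow_natCast b k
    rw [h2, h3] at h1
    exact h1
  calc (ℙ {ω | ∃ ι : Fin k → Fin t, StrictMono ι ∧ Antitone (fun a => X (ι a) ω)}).toReal
      ≤ (S.card : ℝ) * (M.card : ℝ) * ((n : ℝ))⁻¹ ^ k := htr
    _ ≤ b ^ k := hkey1
    _ ≤ a ^ ((k : ℝ) / 2) := hrpow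
end

section
/- There exists a universal constant C > 0 such that for all integers n, k ≥ 1, every integer t ≥ C·k^2, and X_1, ..., X_t i.i.d. uniform on {1, ..., n}, the probability that (X_1, ..., X_t) contains NO non-increasing subsequence of length k is at most e^{−t}. -/
open MeasureTheory ProbabilityTheory Filter


private def auxHt {t : ℕ} (x : Fin t → ℕ) (i : Fin t) : ℕ :=
  ((Finset.univ.filter (fun i' : Fin t => i' < i ∧ x i ≤ x i')).attach).sup
    (fun i' => auxHt x i'.1 + 1)
termination_by i.val
decreasing_by
  have h := i'.2
  simp only [Finset.mem_filter] at h
  exact h.2.1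

lemma auxHt_lt {t : ℕ} (x : Fin t → ℕ) {i i' : Fin t} (h1 : i < i') (h2 : x i' ≤ x i) :
    auxHt x i < auxHt x i' := by
  conv_rhs => rw [auxHt]
  have hmem : i ∈ Finset.univ.filter (fun j : Fin t => j < i' ∧ x i' ≤ x j) := by
    simp [h1, h2]
  have := Finset.le_sup (f := fun j : {j // j ∈ Finset.univ.filter (fun j : Fin t => j < i' ∧ x i' ≤ x j)} => auxHt x j.1 + 1)
    (Finset.mem_attach _ (⟨i, hmem⟩ : {j // j ∈ Finset.univ.filter (fun j : Fin t => j < i' ∧ x i' ≤ x j)}))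
  exact lt_of_lt_of_le (Nat.lt_succ_self _) this

lemma auxHt_chain {t : ℕ} (x : Fin t → ℕ) (i : Fin t) :
    ∃ ι : Fin (auxHt x i + 1) → Fin t, StrictMono ι ∧ Antitone (fun a => x (ι a)) ∧
      ι (Fin.last _) = i := by
  suffices H : ∀ N : ℕ, ∀ i : Fin t, i.val < N → ∃ ι : Fin (auxHt x i + 1) → Fin t,
      StrictMono ι ∧ Antitone (fun a => x (ι a)) ∧ ι (Fin.last _) = i from H (i.val+1) i (Nat.lt_succ_self _)
  intro N
  induction N with
  | zero => intro i hi; omega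
  | succ N IH =>
    intro i hi
    set s := Finset.univ.filter (fun j : Fin t => j < i ∧ x i ≤ x j) with hs
    rcases s.eq_empty_or_nonempty with he | hne
    · have h0 : auxHt x i = 0 := by
        rw [auxHt, ← hs, he]
        simp
      rw [h0]
      refine ⟨fun _ => i, ?_, ?_, rfl⟩
      · intro a b hab
        have ha := a.isLt; have hb := b.isLt
        exact absurd (Fin.ext (by omega) : a = b) (ne_of_lt hab)
      · intro a b _
        have ha := a.isLt; have hb := b.isLt
        rw [(Fin.ext (by omega) : a = b)]
    · obtain ⟨j, hjmem, hsup⟩ := Finset.exists_mem_eq_sup s.attach (hne.attach)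
        (fun j => auxHt x j.1 + 1)
      have heq : auxHt x i = auxHt x j.1 + 1 := by
        rw [auxHt, ← hs]; exact hsup
      have hj : (j : Fin t) ∈ Finset.univ.filter (fun jj : Fin t => jj < i ∧ x i ≤ x jj) := j.2
      rw [Finset.mem_filter] at hj
      obtain ⟨-, hji, hxji⟩ := hj
      obtain ⟨ι', hsm, hanti, hlast⟩ := IH j.1 (by omega)
      have hle : ∀ a, ι' a ≤ j.1 := by
        intro a
        have := hsm.monotone (Fin.le_last a)
        rwa [hlast] at this
      have hcast : auxHt x i + 1 = (auxHt x j.1 + 1) + 1 := by omega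
      have hsm2 : StrictMono (Fin.snoc ι' i : Fin (auxHt x j.1 + 1 + 1) → Fin t) := ?_
      case _ =>
        have hanti2 : Antitone (fun b : Fin (auxHt x j.1 + 1 + 1) => x ((Fin.snoc ι' i : Fin (auxHt x j.1 + 1 + 1) → Fin t) b)) := ?_
        case _ =>
          refine ⟨(Fin.snoc ι' i : Fin (auxHt x j.1 + 1 + 1) → Fin t) ∘ Fin.cast hcast,
            hsm2.comp (Fin.cast_strictMono hcast), ?_, ?_⟩
          · exact hanti2.comp_monotone (Fin.cast_strictMono hcast).monotone
          · have hl : (Fin.cast hcast (Fin.last (auxHt x i)) : Fin (auxHt x j.1 + 1 + 1)) =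
                Fin.last (auxHt x j.1 + 1) := by
              apply Fin.ext; simp [heq]
            simp only [Function.comp_apply, hl, Fin.snoc_last]
        case _ =>
          intro a b hab
          simp only
          induction b using Fin.lastCases with
          | last =>
            induction a using Fin.lastCases with
            | last => exact le_refl _
            | cast a =>
              rw [Fin.snoc_last, Fin.snoc_castSucc]
              calc x i ≤ x j.1 := hxji
                _ = x (ι' (Fin.last _)) := by rw [hlast]
                _ ≤ x (ι' a) := hanti (Fin.le_last a)
          | cast b =>
            induction a using Fin.lastCases with
            | last => exact absurd hab (not_le.mpr (Fin.castSucc_lt_last b))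
            | cast a =>
              rw [Fin.snoc_castSucc, Fin.snoc_castSucc]
              exact hanti (Fin.castSucc_le_castSucc_iff.mp hab)
      · intro a b hab
        induction b using Fin.lastCases with
        | last =>
          induction a using Fin.lastCases with
          | last => exact absurd rfl (ne_of_lt hab)
          | cast a =>
            rw [Fin.snoc_last, Fin.snoc_castSucc]
            exact lt_of_le_of_lt (hle a) hji
        | cast b =>
          induction a using Fin.lastCases with
          | last => exact absurd hab (not_lt.mpr (le_of_lt (Fin.castSucc_lt_last b)))
          | cast a =>
            rw [Fin.snoc_castSucc, Fin.snoc_castSucc]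
            exact hsm (Fin.castSucc_lt_castSucc_iff.mp hab)

lemma aux_fiber {t k : ℕ} (x : Fin t → ℕ)
    (hbad : ¬ ∃ ι : Fin k → Fin t, StrictMono ι ∧ Antitone (fun a => x (ι a))) :
    (∀ i, auxHt x i + 1 < k) ∧
      ∀ i i' : Fin t, i < i' → auxHt x i = auxHt x i' → x i < x i' := by
  constructor
  · intro i
    by_contra hcon
    push_neg at hcon
    obtain ⟨ι, hsm, hanti, -⟩ := auxHt_chain x i
    rcases eq_or_lt_of_le hcon with hEq | hlt
    · exact hbad ⟨ι ∘ Fin.castLE (le_of_eq hEq), hsm.comp (Fin.strictMono_castLE _),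
        hanti.comp_monotone (Fin.strictMono_castLE _).monotone⟩
    · exact hbad ⟨ι ∘ Fin.castLE (le_of_lt hlt), hsm.comp (Fin.strictMono_castLE _),
        hanti.comp_monotone (Fin.strictMono_castLE _).monotone⟩
  · intro i i' hlt hEq
    by_contra hcon
    push_neg at hcon
    have := auxHt_lt x hlt hcon
    omega

lemma aux_multinomial_le {r t : ℕ} (m : Fin r → ℕ) (hm : ∑ j, m j = t) :
    t.factorial ≤ r ^ t * ∏ j, (m j).factorial := by
  classical
  have hmem : m ∈ Finset.piAntidiag (Finset.univ : Finset (Fin r)) t := by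
    rw [Finset.mem_piAntidiag]
    exact ⟨hm, fun i _ => Finset.mem_univ i⟩
  have hexp := Finset.sum_pow_eq_sum_piAntidiag_of_commute (Finset.univ : Finset (Fin r))
      (fun _ => (1:ℕ)) (fun _ _ _ _ _ => Commute.all _ _) t
  simp only [Finset.noncommProd_eq_prod, one_pow, Finset.prod_const_one, mul_one,
    Nat.cast_id, Finset.sum_const, Finset.card_univ, Fintype.card_fin, smul_eq_mul] at hexp
  have hle : Nat.multinomial Finset.univ m ≤ r ^ t := by
    rw [hexp]
    exact Finset.single_le_sum (fun k _ => Nat.zero_le _) hmem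
  have hspec := Nat.multinomial_spec (Finset.univ : Finset (Fin r)) m
  rw [hm] at hspec
  calc t.factorial = (∏ j, (m j).factorial) * Nat.multinomial Finset.univ m := hspec.symm
    _ ≤ (∏ j, (m j).factorial) * r ^ t := Nat.mul_le_mul_left _ hle
    _ = r ^ t * ∏ j, (m j).factorial := Nat.mul_comm _ _

lemma aux_fact_lb : ∀ t : ℕ, ((t : ℝ) / Real.exp 1) ^ t ≤ t.factorial := by
  intro t
  induction t with
  | zero => simp
  | succ m ih =>
    have he : (0:ℝ) < Real.exp 1 := Real.exp_pos 1
    have key : ((m:ℝ) + 1) ^ m ≤ Real.exp 1 * (m:ℝ) ^ m := by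
      rcases Nat.eq_zero_or_pos m with rfl | hm
      · simpa using Real.one_le_exp (by norm_num : (0:ℝ) ≤ 1)
      · have hm' : (0:ℝ) < m := by exact_mod_cast hm
        have h1 : (1 : ℝ) + 1 / m ≤ Real.exp (1 / m) := by
          have := Real.add_one_le_exp (1 / (m:ℝ)); linarith
        have h2 : ((1:ℝ) + 1 / m) ^ m ≤ Real.exp (1/m) ^ m :=
          pow_le_pow_left₀ (by positivity) h1 m
        have h3 : Real.exp (1/(m:ℝ)) ^ m = Real.exp 1 := by
          rw [← Real.exp_nat_mul]; congr 1; field_simp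
        calc ((m:ℝ) + 1) ^ m = ((m:ℝ) * (1 + 1/m)) ^ m := by
              congr 1; field_simp
          _ = (m:ℝ)^m * (1 + 1/m)^m := by rw [mul_pow]
          _ ≤ (m:ℝ)^m * Real.exp 1 := by
              refine mul_le_mul_of_nonneg_left ?_ (by positivity)
              rw [← h3]; exact h2
          _ = Real.exp 1 * (m:ℝ)^m := by ring
    have step : (((m:ℝ)+1) / Real.exp 1) ^ (m+1) ≤ ((m:ℝ)+1) * ((m:ℝ)/Real.exp 1)^m := by
      rw [pow_succ', div_pow, div_pow]
      calc ((m:ℝ)+1)/Real.exp 1 * (((m:ℝ)+1)^m / Real.exp 1 ^ m)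
          ≤ ((m:ℝ)+1)/Real.exp 1 * ((Real.exp 1 * (m:ℝ)^m) / Real.exp 1 ^ m) := by
            refine mul_le_mul_of_nonneg_left ?_ (by positivity)
            exact div_le_div_of_nonneg_right key (by positivity)
        _ = ((m:ℝ)+1) * ((m:ℝ)^m / Real.exp 1 ^ m) := by
            field_simp
    push_cast
    calc (((m:ℝ)+1) / Real.exp 1) ^ (m+1) = (((m:ℝ)+1) / Real.exp 1) ^ (m+1) := rfl
      _ ≤ ((m:ℝ)+1) * ((m:ℝ)/Real.exp 1)^m := step
      _ ≤ ((m:ℝ)+1) * m.factorial := by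
          refine mul_le_mul_of_nonneg_left ih (by positivity)
      _ ≤ ((m+1).factorial : ℝ) := by
          rw [Nat.factorial_succ]; push_cast; ring_nf; simp

noncomputable def badSet (n t k : ℕ) : Finset (Fin t → ℕ) :=
  @Finset.filter _
    (fun v => ¬ ∃ ι : Fin k → Fin t, StrictMono ι ∧ Antitone (fun a => v (ι a)))
    (Classical.decPred _)
    (Fintype.piFinset fun _ : Fin t => Finset.Icc 1 n)

lemma mem_badSet {n t k : ℕ} (v : Fin t → ℕ) :
    v ∈ badSet n t k ↔ (v ∈ Fintype.piFinset fun _ : Fin t => Finset.Icc 1 n) ∧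
      ¬ ∃ ι : Fin k → Fin t, StrictMono ι ∧ Antitone (fun a => v (ι a)) := by
  simp only [badSet, Finset.mem_filter]

lemma aux_count {n t k : ℕ} :
    (badSet n t k).card * t.factorial ≤ (k-1) ^ t * ((k-1) ^ t * n ^ t) := by
  classical
  set r := k - 1 with hr
  set incr : (Fin t → Fin r) → Finset (Fin t → ℕ) := fun f =>
    Finset.filter (fun v => ∀ i i' : Fin t, i < i' → f i = f i' → v i < v i')
      (Fintype.piFinset fun _ : Fin t => Finset.Icc 1 n) with hincr
  have hsub : badSet n t k ⊆ Finset.univ.biUnion incr := by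
    intro v hv
    rw [mem_badSet] at hv
    obtain ⟨hbox, hbad⟩ := hv
    obtain ⟨hg1, hg2⟩ := aux_fiber v hbad
    set g : Fin t → ℕ := auxHt v with hgdef
    refine Finset.mem_biUnion.mpr ⟨fun i => ⟨g i, by have := hg1 i; omega⟩, Finset.mem_univ _, ?_⟩
    rw [hincr, Finset.mem_filter]
    refine ⟨hbox, fun i i' hlt hEq => hg2 i i' hlt ?_⟩
    simpa [Fin.ext_iff] using hEq
  have hcard1 : (badSet n t k).card ≤ ∑ f : Fin t → Fin r, (incr f).card :=
    le_trans (Finset.card_le_card hsub) (Finset.card_biUnion_le)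
  have hperf : ∀ f : Fin t → Fin r, (incr f).card * t.factorial ≤ r ^ t * n ^ t := by
    intro f
    set m : Fin r → ℕ := fun j => (Finset.univ.filter (fun i => f i = j)).card with hm
    have hmsum : ∑ j, m j = t := by
      rw [hm]
      rw [← Finset.card_eq_sum_card_fiberwise (fun i _ => Finset.mem_univ (f i))]
      simp
    have hinj : (incr f).card ≤ ∏ j, Nat.choose n (m j) := by
      have hcardtarget : (Fintype.piFinset fun j : Fin r =>
          (Finset.Icc 1 n).powersetCard (m j)).card = ∏ j, Nat.choose n (m j) := by
        rw [Fintype.card_piFinset]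
        refine Finset.prod_congr rfl fun j _ => ?_
        rw [Finset.card_powersetCard, Nat.card_Icc]
        simp
      rw [← hcardtarget]
      apply Finset.card_le_card_of_injOn
        (fun v => fun j => (Finset.univ.filter (fun i => f i = j)).image v)
      · intro v hv
        simp only [Finset.mem_coe, hincr, Finset.mem_filter] at hv
        obtain ⟨hbox, hmono⟩ := hv
        rw [Finset.mem_coe, Fintype.mem_piFinset]
        intro j
        rw [Finset.mem_powersetCard]
        constructor
        · intro y hy
          rw [Finset.mem_image] at hy
          obtain ⟨i, -, rfl⟩ := hy
          exact Fintype.mem_piFinset.mp hbox i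
        · rw [Finset.card_image_of_injOn]
          intro a ha b hb hab
          by_contra hne
          rcases lt_or_gt_of_ne hne with h | h
          · exact absurd hab (ne_of_lt (hmono a b h
              ((Finset.mem_filter.mp ha).2.trans (Finset.mem_filter.mp hb).2.symm)))
          · exact absurd hab.symm (ne_of_lt (hmono b a h
              ((Finset.mem_filter.mp hb).2.trans (Finset.mem_filter.mp ha).2.symm)))
      · intro v hv w hw hEq
        simp only [Finset.mem_coe, hincr, Finset.mem_filter] at hv hw
        obtain ⟨hvbox, hvmono⟩ := hv
        obtain ⟨hwbox, hwmono⟩ := hw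
        have hfibinj : ∀ (u : Fin t → ℕ), (∀ a b : Fin t, a < b → f a = f b → u a < u b) →
            ∀ j : Fin r, Set.InjOn u (Finset.univ.filter (fun i => f i = j)) := by
          intro u hu j a ha b hb hab
          by_contra hne
          rcases lt_or_gt_of_ne hne with h | h
          · exact absurd hab (ne_of_lt (hu a b h
              ((Finset.mem_filter.mp ha).2.trans (Finset.mem_filter.mp hb).2.symm)))
          · exact absurd hab.symm (ne_of_lt (hu b a h
              ((Finset.mem_filter.mp hb).2.trans (Finset.mem_filter.mp ha).2.symm)))
        funext i
        set j := f i with hj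
        set σ : Finset (Fin t) := Finset.univ.filter (fun i' => f i' = j) with hσ
        have hσcard : σ.card = m j := rfl
        have himg : σ.image v = σ.image w := congrFun hEq j
        have hcv : (σ.image v).card = m j := by
          rw [Finset.card_image_of_injOn (hfibinj v hvmono j), hσcard]
        set emb := σ.orderEmbOfFin hσcard with hemb
        have hembmem : ∀ a, emb a ∈ σ := fun a => Finset.orderEmbOfFin_mem σ hσcard a
        have hembf : ∀ a, f (emb a) = j := fun a => (Finset.mem_filter.mp (hembmem a)).2
        have hgv : (fun a => v (emb a)) = (σ.image v).orderEmbOfFin hcv := by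
          apply Finset.orderEmbOfFin_unique hcv
          · intro a
            exact Finset.mem_image_of_mem v (hembmem a)
          · intro a b hab
            exact hvmono _ _ ((σ.orderEmbOfFin hσcard).strictMono hab)
              ((hembf a).trans (hembf b).symm)
        have hgw : (fun a => w (emb a)) = (σ.image v).orderEmbOfFin hcv := by
          apply Finset.orderEmbOfFin_unique hcv
          · intro a
            rw [himg]
            exact Finset.mem_image_of_mem w (hembmem a)
          · intro a b hab
            exact hwmono _ _ ((σ.orderEmbOfFin hσcard).strictMono hab)
              ((hembf a).trans (hembf b).symm)
        have hiσ : i ∈ σ := by rw [hσ, Finset.mem_filter]; exact ⟨Finset.mem_univ _, rfl⟩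
        have : i ∈ Set.range emb := by
          rw [hemb, Finset.range_orderEmbOfFin]
          exact hiσ
        obtain ⟨a, ha⟩ := this
        calc v i = v (emb a) := by rw [ha]
          _ = w (emb a) := by rw [congrFun hgv a, congrFun hgw a]
          _ = w i := by rw [ha]
    have h1 : t.factorial ≤ r ^ t * ∏ j, (m j).factorial := aux_multinomial_le m hmsum
    have h2 : (∏ j, Nat.choose n (m j)) * ∏ j, (m j).factorial ≤ n ^ t := by
      rw [← Finset.prod_mul_distrib]
      calc ∏ j, Nat.choose n (m j) * (m j).factorial
          = ∏ j, Nat.descFactorial n (m j) := by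
            refine Finset.prod_congr rfl fun j _ => ?_
            rw [Nat.descFactorial_eq_factorial_mul_choose]
            ring
        _ ≤ ∏ j, n ^ (m j) := Finset.prod_le_prod' fun j _ => Nat.descFactorial_le_pow n (m j)
        _ = n ^ (∑ j, m j) := by rw [Finset.prod_pow_eq_pow_sum]
        _ = n ^ t := by rw [hmsum]
    calc (incr f).card * t.factorial ≤ (∏ j, Nat.choose n (m j)) * (r ^ t * ∏ j, (m j).factorial) :=
          Nat.mul_le_mul hinj h1
      _ = r ^ t * ((∏ j, Nat.choose n (m j)) * ∏ j, (m j).factorial) := by ring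
      _ ≤ r ^ t * n ^ t := Nat.mul_le_mul_left _ h2
  calc (badSet n t k).card * t.factorial ≤ (∑ f : Fin t → Fin r, (incr f).card) * t.factorial :=
        Nat.mul_le_mul_right _ hcard1
    _ = ∑ f : Fin t → Fin r, (incr f).card * t.factorial := by rw [Finset.sum_mul]
    _ ≤ ∑ _f : Fin t → Fin r, r ^ t * n ^ t := Finset.sum_le_sum fun f _ => hperf f
    _ = r ^ t * (r ^ t * n ^ t) := by
        rw [Finset.sum_const, Finset.card_univ, Fintype.card_fun]
        simp [mul_comm]


/-- There is a universal constant `C > 0` such that for all integers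
`n, k ≥ 1`, every integer `t ≥ C·k²`, and `X_1, …, X_t` i.i.d. uniform on `{1, …, n}`, the
probability that `(X_1, …, X_t)` contains NO non-increasing subsequence of length `k` is at
most `e^{-t}`. -/
theorem no_nonincreasing_subsequence_prob_upper_bound :
    ∃ C : ℝ, 0 < C ∧
      ∀ (n k : ℕ), 1 ≤ n → 1 ≤ k →
      ∀ t : ℕ, C * (k : ℝ) ^ 2 ≤ (t : ℝ) →
      ∀ (Ω : Type) (_ : MeasureSpace Ω) (_ : IsProbabilityMeasure (ℙ : Measure Ω))
        (X : Fin t → Ω → ℕ), (∀ i, Measurable (X i)) →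
        iIndepFun X ℙ →
        (∀ i m, ℙ {ω | X i ω = m} =
          if m ∈ Finset.Icc 1 n then ((n : ENNReal))⁻¹ else 0) →
        (ℙ {ω | ¬ ∃ ι : Fin k → Fin t, StrictMono ι ∧
            Antitone (fun a => X (ι a) ω)}).toReal ≤
          Real.exp (-(t : ℝ)) := by
  refine ⟨Real.exp 1 ^ 2, by positivity, ?_⟩
  intro n k hn hk t hCt Ω _ hprob X hXm hindep hunif
  classical
  set e : ℝ := Real.exp 1 with hedef
  have he0 : (0:ℝ) < e := Real.exp_pos 1
  have he1 : (1:ℝ) < e := by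
    rw [hedef]
    have := Real.add_one_le_exp (1:ℝ)
    linarith
  have hk1 : (1:ℝ) ≤ (k:ℝ) := by exact_mod_cast hk
  have hkpos : (0:ℝ) < (k:ℝ) := lt_of_lt_of_le one_pos hk1
  have ht0 : (0:ℝ) < (t:ℝ) :=
    lt_of_lt_of_le (by positivity) hCt
  have ht1 : 1 ≤ t := by
    rcases Nat.eq_zero_or_pos t with rfl | h
    · norm_num at ht0
    · exact h
  set A : Set Ω := {ω | ¬ ∃ ι : Fin k → Fin t, StrictMono ι ∧
      Antitone (fun a => X (ι a) ω)} with hA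
  -- product formula for point-vector events
  have hEv : ∀ v : Fin t → ℕ, ℙ {ω | ∀ i, X i ω = v i} = ∏ i, ℙ {ω | X i ω = v i} := by
    intro v
    have h := hindep.measure_inter_preimage_eq_mul (S := Finset.univ)
      (sets := fun i => ({v i} : Set ℕ)) (fun i _ => measurableSet_singleton _)
    have hset : {ω | ∀ i, X i ω = v i} = ⋂ i ∈ Finset.univ, X i ⁻¹' {v i} := by
      ext ω; simp [Set.mem_iInter]
    rw [hset, h]
    rfl
  have hval : ∀ v : Fin t → ℕ, v ∈ Fintype.piFinset (fun _ : Fin t => Finset.Icc 1 n) →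
      ℙ {ω | ∀ i, X i ω = v i} = ((n : ENNReal))⁻¹ ^ t := by
    intro v hv
    rw [hEv v,
      Finset.prod_congr rfl (fun i _ => by
        rw [hunif i (v i), if_pos (Fintype.mem_piFinset.mp hv i)])]
    simp
  have hcover : A ⊆ ⋃ v : Fin t → ℕ, (A ∩ {ω | ∀ i, X i ω = v i}) := by
    intro ω hω
    exact Set.mem_iUnion.mpr ⟨fun i => X i ω, hω, fun i => rfl⟩
  have hterm : ∀ v : Fin t → ℕ, ℙ (A ∩ {ω | ∀ i, X i ω = v i}) ≤
      (if v ∈ badSet n t k then ((n : ENNReal))⁻¹ ^ t else 0) := by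
    intro v
    by_cases hv : v ∈ badSet n t k
    · rw [if_pos hv]
      calc ℙ (A ∩ {ω | ∀ i, X i ω = v i}) ≤ ℙ {ω | ∀ i, X i ω = v i} :=
            measure_mono Set.inter_subset_right
        _ = _ := hval v ((mem_badSet v).mp hv).1
    · rw [if_neg hv]
      rw [mem_badSet] at hv
      push_neg at hv
      by_cases hbox : v ∈ Fintype.piFinset (fun _ : Fin t => Finset.Icc 1 n)
      · obtain ⟨ι, hι1, hι2⟩ := hv hbox
        have hempty : A ∩ {ω | ∀ i, X i ω = v i} = ∅ := by
          ext ω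
          simp only [Set.mem_inter_iff, Set.mem_empty_iff_false, iff_false, not_and]
          intro hωA hωv
          refine hωA ⟨ι, hι1, ?_⟩
          intro a b hab
          simp only
          rw [hωv, hωv]
          exact hι2 hab
        rw [hempty, measure_empty]
      · obtain ⟨i0, hi0⟩ : ∃ i, v i ∉ Finset.Icc 1 n := by
          by_contra hc; push_neg at hc; exact hbox (Fintype.mem_piFinset.mpr hc)
        calc ℙ (A ∩ {ω | ∀ i, X i ω = v i}) ≤ ℙ {ω | X i0 ω = v i0} :=
              measure_mono (fun ω hω => hω.2 i0)
          _ = 0 := by rw [hunif i0 (v i0), if_neg hi0]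
  have hPA : ℙ A ≤ ((badSet n t k).card : ENNReal) * ((n : ENNReal))⁻¹ ^ t := by
    calc ℙ A ≤ ℙ (⋃ v : Fin t → ℕ, (A ∩ {ω | ∀ i, X i ω = v i})) := measure_mono hcover
      _ ≤ ∑' v : Fin t → ℕ, ℙ (A ∩ {ω | ∀ i, X i ω = v i}) := measure_iUnion_le _
      _ ≤ ∑' v : Fin t → ℕ, (if v ∈ badSet n t k then ((n : ENNReal))⁻¹ ^ t else 0) :=
          ENNReal.tsum_le_tsum hterm
      _ = ∑ v ∈ badSet n t k, (if v ∈ badSet n t k then ((n : ENNReal))⁻¹ ^ t else 0) :=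
          tsum_eq_sum (fun v hv => if_neg hv)
      _ = ∑ _v ∈ badSet n t k, ((n : ENNReal))⁻¹ ^ t :=
          Finset.sum_congr rfl (fun v hv => if_pos hv)
      _ = ((badSet n t k).card : ENNReal) * ((n : ENNReal))⁻¹ ^ t := by
          rw [Finset.sum_const, nsmul_eq_mul]
  have hn0 : (n:ℝ) ≠ 0 := by
    have : (1:ℝ) ≤ (n:ℝ) := by exact_mod_cast hn
    linarith
  have htoReal : (ℙ A).toReal ≤ ((badSet n t k).card : ℝ) * ((n:ℝ))⁻¹ ^ t := by
    have hne : ((badSet n t k).card : ENNReal) * ((n : ENNReal))⁻¹ ^ t ≠ ⊤ := by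
      apply ENNReal.mul_ne_top (ENNReal.natCast_ne_top _)
      exact ENNReal.pow_ne_top (ENNReal.inv_ne_top.mpr
        (Nat.cast_ne_zero.mpr (Nat.one_le_iff_ne_zero.mp hn)))
    calc (ℙ A).toReal ≤ (((badSet n t k).card : ENNReal) * ((n : ENNReal))⁻¹ ^ t).toReal :=
          ENNReal.toReal_mono hne hPA
      _ = ((badSet n t k).card : ℝ) * ((n:ℝ))⁻¹ ^ t := by
          rw [ENNReal.toReal_mul, ENNReal.toReal_pow, ENNReal.toReal_inv]
          simp
  -- counting bound, real version
  set r : ℕ := k - 1 with hrdef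
  have hcountR : ((badSet n t k).card : ℝ) * (t.factorial : ℝ) ≤
      (r:ℝ)^t * ((r:ℝ)^t * (n:ℝ)^t) := by
    exact_mod_cast (aux_count (n := n) (t := t) (k := k))
  have hft : (0:ℝ) < (t.factorial : ℝ) := by exact_mod_cast t.factorial_pos
  have hcard_le : ((badSet n t k).card : ℝ) ≤ (r:ℝ)^t * ((r:ℝ)^t * (n:ℝ)^t) / (t.factorial : ℝ) :=
    (le_div_iff₀ hft).mpr hcountR
  have hnt : (n:ℝ)^t * ((n:ℝ)⁻¹)^t = 1 := by
    rw [← mul_pow, mul_inv_cancel₀ hn0, one_pow]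
  have hfl : ((t:ℝ)/e)^t ≤ (t.factorial : ℝ) := aux_fact_lb t
  have hflpos : (0:ℝ) < ((t:ℝ)/e)^t := by positivity
  have hq : (r:ℝ)*(r:ℝ)*e/(t:ℝ) ≤ e⁻¹ := by
    have hrk : (r:ℝ) ≤ (k:ℝ) := by exact_mod_cast Nat.sub_le k 1
    have hr0 : (0:ℝ) ≤ (r:ℝ) := by positivity
    rw [div_le_iff₀ ht0]
    have h1 : e⁻¹ * (e^2 * (k:ℝ)^2) ≤ e⁻¹ * (t:ℝ) :=
      mul_le_mul_of_nonneg_left hCt (by positivity)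
    have h2 : e⁻¹ * (e^2 * (k:ℝ)^2) = e * (k:ℝ)^2 := by
      field_simp
    have h4 : (r:ℝ)*(r:ℝ) ≤ (k:ℝ)^2 := by nlinarith
    have h3 : (r:ℝ)*(r:ℝ)*e ≤ e * (k:ℝ)^2 := by
      calc (r:ℝ)*(r:ℝ)*e ≤ (k:ℝ)^2*e := mul_le_mul_of_nonneg_right h4 he0.le
        _ = e * (k:ℝ)^2 := mul_comm _ _
    linarith
  calc (ℙ A).toReal ≤ ((badSet n t k).card : ℝ) * ((n:ℝ))⁻¹ ^ t := htoReal
    _ ≤ ((r:ℝ)^t * ((r:ℝ)^t * (n:ℝ)^t) / (t.factorial : ℝ)) * ((n:ℝ)⁻¹) ^ t :=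
        mul_le_mul_of_nonneg_right hcard_le (by positivity)
    _ = (r:ℝ)^t * (r:ℝ)^t / (t.factorial : ℝ) * ((n:ℝ)^t * ((n:ℝ)⁻¹)^t) := by ring
    _ = (r:ℝ)^t * (r:ℝ)^t / (t.factorial : ℝ) := by rw [hnt, mul_one]
    _ ≤ (r:ℝ)^t * (r:ℝ)^t / ((t:ℝ)/e)^t :=
        div_le_div_of_nonneg_left (by positivity) hflpos hfl
    _ = ((r:ℝ)*(r:ℝ)*e/(t:ℝ))^t := by
        rw [div_pow, div_div_eq_mul_div, div_pow, mul_pow, mul_pow]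
    _ ≤ (e⁻¹)^t := pow_le_pow_left₀ (by positivity) hq t
    _ = Real.exp (-(t:ℝ)) := by
        rw [inv_pow, hedef, ← Real.exp_nat_mul, mul_one, ← Real.exp_neg]
end

section
/- There exists a universal constant c > 0 such that for any sequence of positive integers (k(n))_{n≥1} with k(n) ≥ n/100 for all n, the following holds: if t(n) = ⌊c·n·k(n)⌋ and X_1, ..., X_{t(n)} are i.i.d. uniform on {1, ..., n}, then the probability that (X_1, ..., X_{t(n)}) contains a non-increasing subsequence of length k(n) tends to 0 as n → ∞. -/
open MeasureTheory ProbabilityTheory Filter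

lemma my_choose_le_two_pow (m j : ℕ) : m.choose j ≤ 2 ^ m := by
  rcases le_or_gt j m with h | h
  · calc m.choose j ≤ ∑ i ∈ Finset.range (m+1), m.choose i :=
        Finset.single_le_sum (fun i _ => Nat.zero_le _) (Finset.mem_range.2 (Nat.lt_succ_of_le h))
      _ = 2 ^ m := Nat.sum_range_choose m
  · rw [Nat.choose_eq_zero_of_lt h]; exact Nat.zero_le _

lemma my_pow_self_le (k : ℕ) : (k:ℝ)^k ≤ Real.exp 1 ^ k * k.factorial := by
  induction k with
  | zero => simp
  | succ k ih =>
    rcases Nat.eq_zero_or_pos k with rfl | hk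
    · simpa using Real.one_le_exp (by norm_num : (0:ℝ) ≤ 1)
    · have hk0 : (0:ℝ) < k := by exact_mod_cast hk
      have key : ((k:ℝ)+1)^k ≤ Real.exp 1 * (k:ℝ)^k := by
        have h1 : (k:ℝ)+1 ≤ k * Real.exp (1/k) := by
          have h := Real.add_one_le_exp (1/(k:ℝ))
          have := mul_le_mul_of_nonneg_left h hk0.le
          calc (k:ℝ)+1 = k * (1/k + 1) := by field_simp; ring
            _ ≤ k * Real.exp (1/k) := mul_le_mul_of_nonneg_left h hk0.le
        calc ((k:ℝ)+1)^k ≤ ((k:ℝ) * Real.exp (1/k))^k := by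
              apply pow_le_pow_left₀ (by positivity) h1
          _ = (k:ℝ)^k * Real.exp (1/k)^k := mul_pow _ _ _
          _ = Real.exp 1 * (k:ℝ)^k := by
              rw [← Real.exp_nat_mul]
              rw [mul_one_div, div_self hk0.ne', mul_comm]
      calc ((k+1:ℕ):ℝ)^(k+1) = ((k:ℝ)+1) * ((k:ℝ)+1)^k := by push_cast; ring
        _ ≤ ((k:ℝ)+1) * (Real.exp 1 * (k:ℝ)^k) := by
            apply mul_le_mul_of_nonneg_left key (by positivity)
        _ ≤ ((k:ℝ)+1) * (Real.exp 1 * (Real.exp 1 ^ k * k.factorial)) := by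
            have := mul_le_mul_of_nonneg_left ih (Real.exp_pos 1).le
            apply mul_le_mul_of_nonneg_left this (by positivity)
        _ = Real.exp 1 ^ (k+1) * ((k+1).factorial) := by
            rw [Nat.factorial_succ]; push_cast; ring

lemma my_card_strictMono_le (t k : ℕ)
    [DecidablePred (fun f : Fin k → Fin t => StrictMono f)] :
    (Finset.univ.filter (fun f : Fin k → Fin t => StrictMono f)).card ≤ t.choose k := by
  have hcard : ((Finset.univ : Finset (Fin t)).powersetCard k).card = t.choose k := by
    rw [Finset.card_powersetCard, Finset.card_univ, Fintype.card_fin]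
  rw [← hcard]
  apply Finset.card_le_card_of_injOn (fun f => Finset.image f Finset.univ)
  · intro f hf
    rw [Finset.mem_coe, Finset.mem_filter] at hf
    rw [Finset.mem_coe, Finset.mem_powersetCard]
    exact ⟨Finset.subset_univ _, by
      rw [Finset.card_image_of_injective _ hf.2.injective, Finset.card_univ, Fintype.card_fin]⟩
  · intro f hf g hg hfg
    simp only [Finset.coe_filter, Set.mem_setOf_eq, Finset.mem_univ, true_and] at hf hg
    have hcf : (Finset.image f Finset.univ).card = k := by
      rw [Finset.card_image_of_injective _ hf.injective, Finset.card_univ, Fintype.card_fin]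
    have hf' := Finset.orderEmbOfFin_unique hcf
      (fun x => Finset.mem_image_of_mem f (Finset.mem_univ x)) hf
    have hg' := Finset.orderEmbOfFin_unique hcf
      (fun x => by rw [show Finset.image f Finset.univ = Finset.image g Finset.univ from hfg]; exact Finset.mem_image_of_mem g (Finset.mem_univ x)) hg
    exact hf'.trans hg'.symm

lemma my_card_antitone_le (n k : ℕ)
    [DecidablePred (fun v : Fin k → Fin (n+1) => Antitone v ∧ ∀ a, 1 ≤ (v a : ℕ))] :
    (Finset.univ.filter
        (fun v : Fin k → Fin (n+1) => Antitone v ∧ ∀ a, 1 ≤ (v a : ℕ))).card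
      ≤ (n + k).choose k := by
  have hlt : ∀ (v : Fin k → Fin (n+1)) (a : Fin k), (v a.rev : ℕ) + a < n + k :=
    fun v a => Nat.add_lt_add_of_le_of_lt (Nat.lt_succ_iff.1 (v a.rev).isLt) a.isLt
  set g : (Fin k → Fin (n+1)) → Fin k → Fin (n+k) :=
    fun v a => ⟨(v a.rev : ℕ) + a, hlt v a⟩ with hgdef
  have hmono : ∀ v : Fin k → Fin (n+1), Antitone v → StrictMono (g v) := by
    intro v hv a b hab
    have h1 : (v a.rev : ℕ) ≤ (v b.rev : ℕ) := hv (Fin.rev_le_rev.2 hab.le)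
    exact Fin.mk_lt_mk.2 (Nat.add_lt_add_of_le_of_lt h1 hab)
  have hcard : ((Finset.univ : Finset (Fin (n+k))).powersetCard k).card = (n+k).choose k := by
    rw [Finset.card_powersetCard, Finset.card_univ, Fintype.card_fin]
  rw [← hcard]
  apply Finset.card_le_card_of_injOn (fun v => Finset.image (g v) Finset.univ)
  · intro v hv
    rw [Finset.mem_coe, Finset.mem_filter] at hv
    rw [Finset.mem_coe, Finset.mem_powersetCard]
    exact ⟨Finset.subset_univ _, by
      rw [Finset.card_image_of_injective _ (hmono v hv.2.1).injective,
        Finset.card_univ, Fintype.card_fin]⟩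
  · intro v hv w hw hfg
    simp only [Finset.coe_filter, Set.mem_setOf_eq, Finset.mem_univ, true_and] at hv hw
    have hcf : (Finset.image (g v) Finset.univ).card = k := by
      rw [Finset.card_image_of_injective _ (hmono v hv.1).injective,
        Finset.card_univ, Fintype.card_fin]
    have hv' := Finset.orderEmbOfFin_unique hcf
      (fun x => Finset.mem_image_of_mem (g v) (Finset.mem_univ x)) (hmono v hv.1)
    have hw' := Finset.orderEmbOfFin_unique hcf
      (fun x => by rw [show Finset.image (g v) Finset.univ = Finset.image (g w) Finset.univ from hfg]; exact Finset.mem_image_of_mem (g w) (Finset.mem_univ x)) (hmono w hw.1)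
    have hgvw : g v = g w := hv'.trans hw'.symm
    funext i
    have := congrFun hgvw i.rev
    rw [hgdef] at this
    simp only [Fin.mk.injEq, Fin.rev_rev] at this
    exact Fin.val_injective (Nat.add_right_cancel this)

/-- There is a universal constant `c > 0` such that for any sequence of
positive integers `(k(n))` with `k(n) ≥ n/100` for all `n`, the following holds: if
`t(n) = ⌊c·n·k(n)⌋` and `X_1, …, X_{t(n)}` are i.i.d. uniform on `{1, …, n}` (formalized as
the first `t(n)` members of an i.i.d. uniform sequence), then the probability that
`(X_1, …, X_{t(n)})` contains a non-increasing subsequence of length `k(n)` tends to `0` as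
`n → ∞`. -/
theorem nonincreasing_subsequence_prob_tendsto_zero :
    ∃ c : ℝ, 0 < c ∧
      ∀ k : ℕ → ℕ, (∀ n, 1 ≤ k n) → (∀ n : ℕ, (n : ℝ) / 100 ≤ (k n : ℝ)) →
      ∀ (Ω : Type) (_ : MeasureSpace Ω) (_ : IsProbabilityMeasure (ℙ : Measure Ω))
        (X : ℕ → ℕ → Ω → ℕ), (∀ n i, Measurable (X n i)) →
        (∀ n, iIndepFun (X n) ℙ) →
        (∀ n i m, ℙ {ω | X n i ω = m} =
          if m ∈ Finset.Icc 1 n then ((n : ENNReal))⁻¹ else 0) →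
        Tendsto
          (fun n => (ℙ {ω | ∃ ι : Fin (k n) → ℕ, StrictMono ι ∧
              (∀ a, ι a < ⌊c * n * k n⌋₊) ∧
              Antitone (fun a => X n (ι a) ω)}).toReal)
          atTop (nhds 0) := by
  classical
  refine ⟨(2:ℝ)⁻¹ ^ 110, by positivity, ?_⟩
  intro k hk1 hk100 Ω _ _ X hmeas hind hunif
  have hq0 : (0:ℝ) ≤ Real.exp 1 * (2:ℝ)⁻¹ ^ 9 := by positivity
  have hq1 : Real.exp 1 * (2:ℝ)⁻¹ ^ 9 < 1 := by
    nlinarith [Real.exp_one_lt_d9]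
  have hktop : Tendsto k atTop atTop := by
    rw [tendsto_atTop]
    intro b
    rw [eventually_atTop]
    refine ⟨100 * b, fun n hn => ?_⟩
    have h1 : (n:ℝ)/100 ≤ k n := hk100 n
    have h2 : ((100 * b : ℕ):ℝ) ≤ (n:ℝ) := Nat.cast_le.2 hn
    have : (b:ℝ) ≤ k n := by push_cast at h2; linarith
    exact_mod_cast this
  refine squeeze_zero' (Eventually.of_forall fun n => ENNReal.toReal_nonneg) ?_
    ((tendsto_pow_atTop_nhds_zero_of_lt_one hq0 hq1).comp hktop)
  rw [eventually_atTop]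
  refine ⟨1, fun n hn => ?_⟩
  simp only [Function.comp]
  set K := k n with hK
  set t := ⌊(2:ℝ)⁻¹ ^ 110 * n * K⌋₊ with ht
  have hK1 : 1 ≤ K := hk1 n
  haveI : Nonempty (Fin K) := ⟨⟨0, hK1⟩⟩
  have hn1 : 1 ≤ n := hn
  set I : Finset ((Fin K → Fin t) × (Fin K → Fin (n+1))) :=
    (Finset.univ.filter (fun f : Fin K → Fin t => StrictMono f)) ×ˢ
    (Finset.univ.filter (fun v : Fin K → Fin (n+1) => Antitone v ∧ ∀ a, 1 ≤ (v a : ℕ)))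
    with hI
  set A : (Fin K → Fin t) × (Fin K → Fin (n+1)) → Set Ω :=
    fun p => {ω | ∀ a, X n (p.1 a : ℕ) ω = (p.2 a : ℕ)} with hA
  have hGnull : ℙ {ω | ¬ ∀ i < t, X n i ω ∈ Finset.Icc 1 n} = 0 := by
    have hsub : {ω | ¬ ∀ i < t, X n i ω ∈ Finset.Icc 1 n} ⊆
        ⋃ (i : ℕ) (m : ℕ) (_ : m ∉ Finset.Icc 1 n), {ω | X n i ω = m} := by
      intro ω hω
      simp only [Set.mem_setOf_eq, not_forall] at hω
      obtain ⟨i, _, hmem⟩ := hω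
      exact Set.mem_iUnion.2 ⟨i, Set.mem_iUnion.2 ⟨X n i ω, Set.mem_iUnion.2 ⟨hmem, rfl⟩⟩⟩
    refine measure_mono_null hsub ?_
    refine measure_iUnion_null fun i => measure_iUnion_null fun m =>
      measure_iUnion_null fun hm => ?_
    rw [hunif n i m, if_neg hm]
  have hcover : {ω | ∃ ι : Fin K → ℕ, StrictMono ι ∧ (∀ a, ι a < t) ∧
      Antitone (fun a => X n (ι a) ω)} ⊆
      {ω | ¬ ∀ i < t, X n i ω ∈ Finset.Icc 1 n} ∪ ⋃ p ∈ I, A p := by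
    intro ω hω
    obtain ⟨ι, hmono, hlt, hanti⟩ := hω
    by_cases hG : ∀ i < t, X n i ω ∈ Finset.Icc 1 n
    · right
      have hval : ∀ a : Fin K, X n (ι a) ω ∈ Finset.Icc 1 n := fun a => hG _ (hlt a)
      set p : (Fin K → Fin t) × (Fin K → Fin (n+1)) :=
        (fun a => ⟨ι a, hlt a⟩, fun a =>
          ⟨X n (ι a) ω, Nat.lt_succ_of_le (Finset.mem_Icc.1 (hval a)).2⟩) with hpd
      have hpI : p ∈ I := by
        rw [hI, Finset.mem_product, Finset.mem_filter, Finset.mem_filter]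
        exact ⟨⟨Finset.mem_univ _, fun a b hab => Fin.mk_lt_mk.2 (hmono hab)⟩,
          Finset.mem_univ _, fun a b hab => Fin.mk_le_mk.2 (hanti hab),
          fun a => (Finset.mem_Icc.1 (hval a)).1⟩
      exact Set.mem_iUnion.2 ⟨p, Set.mem_iUnion.2 ⟨hpI, fun a => rfl⟩⟩
    · left; exact hG
  have hatom : ∀ p ∈ I, ℙ (A p) = ((n:ENNReal))⁻¹ ^ K := by
    rintro ⟨ι, v⟩ hp
    rw [hI, Finset.mem_product, Finset.mem_filter, Finset.mem_filter] at hp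
    obtain ⟨⟨-, hι⟩, -, -, hv1⟩ := hp
    set f : Fin K → ℕ := fun a => (ι a : ℕ) with hf
    have hfinj : Function.Injective f := fun a b hab => hι.injective (Fin.val_injective hab)
    set B : ℕ → Set ℕ := fun i => {((v (Function.invFun f i) : ℕ))} with hB
    have hBf : ∀ a, B (f a) = {(v a : ℕ)} := by
      intro a
      rw [hB]
      simp only
      rw [Function.leftInverse_invFun hfinj a]
    have hset : A (ι, v) = ⋂ i ∈ Finset.image f Finset.univ, X n i ⁻¹' B i := by
      ext ω
      simp only [hA, Set.mem_setOf_eq, Set.mem_iInter, Finset.mem_image, Finset.mem_univ,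
        true_and, forall_exists_index, Set.mem_preimage]
      constructor
      · rintro h i a rfl
        rw [hBf a]
        exact h a
      · intro h a
        have := h (f a) a rfl
        rw [hBf a] at this
        exact this
    rw [hset, (hind n).measure_inter_preimage_eq_mul _ (fun i _ => measurableSet_singleton _),
      Finset.prod_image (fun a _ b _ h => hfinj h)]
    have hterm : ∀ a : Fin K, ℙ (X n (f a) ⁻¹' B (f a)) = ((n:ENNReal))⁻¹ := by
      intro a
      rw [hBf a]
      have hpre : X n (f a) ⁻¹' {((v a : ℕ))} = {ω | X n (f a) ω = (v a : ℕ)} := rfl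
      rw [hpre, hunif n (f a) (v a : ℕ),
        if_pos (Finset.mem_Icc.2 ⟨hv1 a, Nat.lt_succ_iff.1 (v a).isLt⟩)]
    rw [Finset.prod_congr rfl (fun a _ => hterm a), Finset.prod_const, Finset.card_univ,
      Fintype.card_fin]
  have hmain : ℙ {ω | ∃ ι : Fin K → ℕ, StrictMono ι ∧ (∀ a, ι a < t) ∧
      Antitone (fun a => X n (ι a) ω)} ≤ (I.card : ENNReal) * ((n:ENNReal))⁻¹ ^ K := by
    calc ℙ {ω | ∃ ι : Fin K → ℕ, StrictMono ι ∧ (∀ a, ι a < t) ∧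
          Antitone (fun a => X n (ι a) ω)}
        ≤ ℙ ({ω | ¬ ∀ i < t, X n i ω ∈ Finset.Icc 1 n} ∪ ⋃ p ∈ I, A p) :=
          measure_mono hcover
      _ ≤ ℙ {ω | ¬ ∀ i < t, X n i ω ∈ Finset.Icc 1 n} + ℙ (⋃ p ∈ I, A p) :=
          measure_union_le _ _
      _ = ℙ (⋃ p ∈ I, A p) := by rw [hGnull, zero_add]
      _ ≤ ∑ p ∈ I, ℙ (A p) := measure_biUnion_finset_le _ _
      _ = ∑ _p ∈ I, ((n:ENNReal))⁻¹ ^ K := Finset.sum_congr rfl hatom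
      _ = I.card * ((n:ENNReal))⁻¹ ^ K := by rw [Finset.sum_const, nsmul_eq_mul]
  have hcardI : I.card ≤ t.choose K * (n + K).choose K := by
    rw [hI, Finset.card_product]
    exact Nat.mul_le_mul (my_card_strictMono_le t K) (my_card_antitone_le n K)
  have hmain2 : ℙ {ω | ∃ ι : Fin K → ℕ, StrictMono ι ∧ (∀ a, ι a < t) ∧
      Antitone (fun a => X n (ι a) ω)} ≤
      ((t.choose K * (n + K).choose K : ℕ) : ENNReal) * ((n:ENNReal))⁻¹ ^ K :=
    hmain.trans (mul_le_mul_left (Nat.cast_le.2 hcardI) _)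
  have hne : ((t.choose K * (n + K).choose K : ℕ) : ENNReal) * ((n:ENNReal))⁻¹ ^ K ≠ ⊤ := by
    apply ENNReal.mul_ne_top (ENNReal.natCast_ne_top _)
    apply ENNReal.pow_ne_top
    rw [ENNReal.inv_ne_top]
    exact_mod_cast Nat.one_le_iff_ne_zero.1 hn1
  have htoReal : (ℙ {ω | ∃ ι : Fin K → ℕ, StrictMono ι ∧ (∀ a, ι a < t) ∧
      Antitone (fun a => X n (ι a) ω)}).toReal ≤
      ((t.choose K * (n + K).choose K : ℕ) : ℝ) * ((n:ℝ)⁻¹) ^ K := by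
    have h := ENNReal.toReal_mono hne hmain2
    rwa [ENNReal.toReal_mul, ENNReal.toReal_pow, ENNReal.toReal_inv, ENNReal.toReal_natCast,
      ENNReal.toReal_natCast] at h
  refine htoReal.trans ?_
  have hn0 : (0:ℝ) < n := by exact_mod_cast hn1
  have hK0 : (0:ℝ) < K := by exact_mod_cast hK1
  have hnK : (n:ℝ) ≤ 100 * K := by have := hk100 n; rw [← hK] at this; linarith
  have h1 : (t.choose K : ℝ) ≤ (Real.exp 1 * t / K) ^ K := by
    calc (t.choose K : ℝ) ≤ (t:ℝ)^K / (K.factorial : ℝ) := Nat.choose_le_pow_div K t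
      _ ≤ (Real.exp 1 * t / K) ^ K := by
          rw [div_pow, mul_pow, div_le_div_iff₀ (by positivity) (by positivity)]
          calc (t:ℝ)^K * (K:ℝ)^K ≤ (t:ℝ)^K * (Real.exp 1 ^ K * K.factorial) :=
                mul_le_mul_of_nonneg_left (my_pow_self_le K) (by positivity)
            _ = Real.exp 1 ^ K * (t:ℝ)^K * K.factorial := by ring
  have h2 : (((n+K).choose K : ℕ) : ℝ) ≤ ((2:ℝ) ^ 101) ^ K := by
    calc (((n+K).choose K : ℕ) : ℝ) ≤ (((2:ℕ) ^ (n+K) : ℕ) : ℝ) :=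
          Nat.cast_le.2 (my_choose_le_two_pow _ _)
      _ = (2:ℝ) ^ (n + K) := by push_cast; ring
      _ ≤ (2:ℝ) ^ (101 * K) := by
          apply pow_le_pow_right₀ (by norm_num)
          have hnn : n ≤ 100 * K := by exact_mod_cast hnK
          omega
      _ = ((2:ℝ) ^ 101) ^ K := by rw [pow_mul]
  have ht_le : (t:ℝ) ≤ (2:ℝ)⁻¹ ^ 110 * n * K := by
    rw [ht]
    exact Nat.floor_le (by positivity)
  have hbase : Real.exp 1 * t / K * (2:ℝ)^101 * (n:ℝ)⁻¹ ≤ Real.exp 1 * (2:ℝ)⁻¹ ^ 9 := by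
    have hstep : (t:ℝ) / (K * n) ≤ (2:ℝ)⁻¹ ^ 110 := by
      rw [div_le_iff₀ (by positivity)]
      calc (t:ℝ) ≤ (2:ℝ)⁻¹ ^ 110 * n * K := ht_le
        _ = (2:ℝ)⁻¹ ^ 110 * (K * n) := by ring
    calc Real.exp 1 * t / K * (2:ℝ)^101 * (n:ℝ)⁻¹
        = Real.exp 1 * (2:ℝ)^101 * ((t:ℝ) / (K * n)) := by field_simp
      _ ≤ Real.exp 1 * (2:ℝ)^101 * ((2:ℝ)⁻¹ ^ 110) := by
          apply mul_le_mul_of_nonneg_left hstep (by positivity)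
      _ = Real.exp 1 * (2:ℝ)⁻¹ ^ 9 := by
          rw [mul_assoc]
          congr 1
          norm_num
  push_cast
  calc (t.choose K : ℝ) * (((n+K).choose K : ℕ) : ℝ) * ((n:ℝ)⁻¹) ^ K
      ≤ (Real.exp 1 * t / K) ^ K * ((2:ℝ)^101) ^ K * ((n:ℝ)⁻¹) ^ K := by
        apply mul_le_mul_of_nonneg_right
          (mul_le_mul h1 h2 (by positivity) (by positivity)) (by positivity)
    _ = (Real.exp 1 * t / K * (2:ℝ)^101 * (n:ℝ)⁻¹) ^ K := by rw [← mul_pow, ← mul_pow]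
    _ ≤ (Real.exp 1 * (2:ℝ)⁻¹ ^ 9) ^ K := pow_le_pow_left₀ (by positivity) hbase K
end

section
/- There exist universal constants 0 < c_L < c_U such that for every fixed integer n ≥ 1, P( c_L · k · n ≤ T(n, k) ≤ c_U · k · n ) → 1 as k → ∞. -/
open MeasureTheory ProbabilityTheory Filter

/-- Deterministic column heights of the CD message grid driven by the selection sequence `x`
(selections are `x 1, x 2, …`): `gridH x t i` is the height of column `i` after `t` steps. -/
def gridH (x : ℕ → ℕ) : ℕ → ℕ → ℕ
  | 0, _ => 0
  | (t + 1), i =>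
      if i ≤ x (t + 1) then max (gridH x t i) (gridH x t (x (t + 1)) + 1) else gridH x t i

/-- The set of columns (among `{1, …, n}`) that are not yet full (height `< k`) at time `t`. -/
def activeCols (n k : ℕ) (x : ℕ → ℕ) (t : ℕ) : Finset ℕ :=
  (Finset.Icc 1 n).filter fun i => gridH x t i < k

/-- `fillTime n k X ω` is the first time `t` at which every column of the `n × k` message grid
is full, for the realized selection sequence `ω ↦ X · ω`. -/
noncomputable def fillTime {Ω : Type*} (n k : ℕ) (X : ℕ → Ω → ℕ) (ω : Ω) : ℕ :=
  sInf {t | ∀ i ∈ Finset.Icc 1 n, gridH (fun s => X s ω) t i = k}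

/-- `X` is a (random) selection process for the `n × k` message grid of the CD heuristic:
the selections `X 1, X 2, …` are measurable, and conditionally on the history
`X 1 = x 1, …, X t = x t` (an event of positive probability, with at least one non-full
column), the next selection `X (t+1)` is uniformly distributed on the set of non-full
columns. -/
def IsGridProcess {Ω : Type*} [MeasureSpace Ω] (n k : ℕ) (X : ℕ → Ω → ℕ) : Prop :=
  (∀ t, Measurable (X t)) ∧
    ∀ (t : ℕ) (x : ℕ → ℕ),
      ℙ {ω | ∀ s, 1 ≤ s → s ≤ t → X s ω = x s} ≠ 0 →
      (activeCols n k x t).Nonempty →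
      ∀ j : ℕ,
        ProbabilityTheory.cond ℙ {ω | ∀ s, 1 ≤ s → s ≤ t → X s ω = x s}
            {ω | X (t + 1) ω = j} =
          if j ∈ activeCols n k x t then ((activeCols n k x t).card : ENNReal)⁻¹ else 0

set_option linter.unusedSectionVars false

namespace CD

lemma gridH_succ (x : ℕ → ℕ) (t i : ℕ) :
    gridH x (t+1) i = if i ≤ x (t+1) then max (gridH x t i) (gridH x t (x (t+1)) + 1)
      else gridH x t i := rfl

lemma gridH_zero (x : ℕ → ℕ) (i : ℕ) : gridH x 0 i = 0 := rfl

lemma gridH_le_succ (x : ℕ → ℕ) (t i : ℕ) : gridH x t i ≤ gridH x (t+1) i := by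
  rw [gridH_succ]; split
  · exact le_max_left _ _
  · exact le_rfl

lemma gridH_mono (x : ℕ → ℕ) {t t' : ℕ} (h : t ≤ t') (i : ℕ) :
    gridH x t i ≤ gridH x t' i := by
  induction t' with
  | zero => simp [Nat.le_zero.mp h]
  | succ t' ih =>
    rcases Nat.lt_or_ge t (t'+1) with h' | h'
    · exact (ih (Nat.lt_succ_iff.mp h')).trans (gridH_le_succ x t' i)
    · have : t = t' + 1 := le_antisymm h h'
      subst this; exact le_rfl

lemma gridH_anti (x : ℕ → ℕ) (t : ℕ) : ∀ {i j : ℕ}, i ≤ j → gridH x t j ≤ gridH x t i := by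
  induction t with
  | zero => intro i j _; simp [gridH_zero]
  | succ t ih =>
    intro i j hij
    rw [gridH_succ, gridH_succ]
    by_cases hj : j ≤ x (t+1)
    · rw [if_pos hj, if_pos (hij.trans hj)]
      exact max_le_max (ih hij) le_rfl
    · rw [if_neg hj]
      by_cases hi : i ≤ x (t+1)
      · rw [if_pos hi]
        exact (ih hij).trans (le_max_left _ _)
      · rw [if_neg hi]; exact ih hij

lemma gridH_congr {x y : ℕ → ℕ} :
    ∀ t : ℕ, (∀ s, 1 ≤ s → s ≤ t → x s = y s) → ∀ i, gridH x t i = gridH y t i := by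
  intro t
  induction t with
  | zero => intro _ i; rfl
  | succ t ih =>
    intro h i
    have hx : x (t+1) = y (t+1) := h _ (Nat.succ_le_succ (Nat.zero_le _)) le_rfl
    have ih' := ih (fun s h1 h2 => h s h1 (h2.trans (Nat.le_succ t)))
    rw [gridH_succ, gridH_succ, hx, ih' i, ih' (y (t+1))]

lemma activeCols_congr {x y : ℕ → ℕ} {n k t : ℕ} (h : ∀ s, 1 ≤ s → s ≤ t → x s = y s) :
    activeCols n k x t = activeCols n k y t := by
  unfold activeCols
  apply Finset.filter_congr
  intro i _
  rw [gridH_congr t h i]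

/-- chain extraction: a height of at least `c` yields a time-increasing,
value-nonincreasing chain of selections with values `≥ i`. -/
lemma gridH_chain (x : ℕ → ℕ) :
    ∀ (t c i : ℕ), c ≤ gridH x t i →
      ∃ l : List ℕ, l.length = c ∧ l.Chain' (· < ·) ∧ l.Chain' (fun a b => x b ≤ x a) ∧
        ∀ a ∈ l, 1 ≤ a ∧ a ≤ t ∧ i ≤ x a := by
  intro t
  induction t with
  | zero =>
    intro c i hc
    rw [gridH_zero] at hc
    exact ⟨[], by simpa using (Nat.le_zero.mp hc).symm, List.isChain_nil, List.isChain_nil,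
      by simp⟩
  | succ t ih =>
    intro c i hc
    rw [gridH_succ] at hc
    by_cases hi : i ≤ x (t+1)
    · rw [if_pos hi] at hc
      by_cases h1 : c ≤ gridH x t i
      · obtain ⟨l, hlen, hch, hval, hmem⟩ := ih c i h1
        exact ⟨l, hlen, hch, hval, fun a ha =>
          ⟨(hmem a ha).1, (hmem a ha).2.1.trans (Nat.le_succ t), (hmem a ha).2.2⟩⟩
      · have hc2 : c ≤ gridH x t (x (t+1)) + 1 := by
          rcases le_max_iff.mp hc with h | h
          · exact absurd h h1
          · exact h
        have hcpos : 1 ≤ c := Nat.one_le_iff_ne_zero.mpr (by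
          intro h0; exact h1 (h0 ▸ Nat.zero_le _))
        obtain ⟨l, hlen, hch, hval, hmem⟩ := ih (c - 1) (x (t+1)) (by omega)
        refine ⟨l ++ [t+1], ?_, ?_, ?_, ?_⟩
        · simp [hlen]; omega
        · rw [List.Chain', List.isChain_append]
          refine ⟨hch, List.isChain_singleton _, ?_⟩
          intro a ha b hb
          simp at hb; subst hb
          have := hmem a (List.mem_of_mem_getLast? ha)
          omega
        · rw [List.Chain', List.isChain_append]
          refine ⟨hval, List.isChain_singleton _, ?_⟩
          intro a ha b hb
          simp at hb; subst hb
          exact (hmem a (List.mem_of_mem_getLast? ha)).2.2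
        · intro a ha
          rcases List.mem_append.mp ha with h | h
          · obtain ⟨ha1, ha2, ha3⟩ := hmem a h
            exact ⟨ha1, ha2.trans (Nat.le_succ t), hi.trans ha3⟩
          · simp at h; subst h
            exact ⟨Nat.succ_le_succ (Nat.zero_le _), le_rfl, hi⟩
    · rw [if_neg hi] at hc
      obtain ⟨l, hlen, hch, hval, hmem⟩ := ih c i hc
      exact ⟨l, hlen, hch, hval, fun a ha =>
        ⟨(hmem a ha).1, (hmem a ha).2.1.trans (Nat.le_succ t), (hmem a ha).2.2⟩⟩


/-- a selection sequence is *good* if it always selects an active column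
whenever one exists. -/
def Good (n k : ℕ) (x : ℕ → ℕ) : Prop :=
  ∀ t, (activeCols n k x t).Nonempty → x (t+1) ∈ activeCols n k x t

def FullAt (n k : ℕ) (x : ℕ → ℕ) (t : ℕ) : Prop :=
  ∀ i ∈ Finset.Icc 1 n, gridH x t i = k

lemma good_invariant {n k : ℕ} {x : ℕ → ℕ} (hn : 1 ≤ n) (hg : Good n k x) :
    ∀ t, (∀ t' ≤ t, ¬ FullAt n k x t') →
      (∀ i, gridH x t i ≤ k) ∧ (activeCols n k x t).Nonempty ∧
        t ≤ ∑ i ∈ Finset.Icc 1 n, gridH x t i := by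
  intro t
  induction t with
  | zero =>
    intro h
    have h0 := h 0 le_rfl
    have hk : 1 ≤ k := by
      by_contra hk
      apply h0
      intro i _
      simp [gridH_zero]; omega
    refine ⟨fun i => by simp [gridH_zero], ⟨1, ?_⟩, Nat.zero_le _⟩
    simp [activeCols, Finset.mem_filter, Finset.mem_Icc, gridH_zero]
    exact List.mem_filter.mpr ⟨List.mem_range'_1.mpr ⟨le_rfl, by omega⟩, decide_eq_true (by omega)⟩
  | succ t ih =>
    intro h
    obtain ⟨hb, hne, hS⟩ := ih (fun t' ht' => h t' (ht'.trans (Nat.le_succ t)))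
    have hmem := hg t hne
    rw [activeCols, Finset.mem_filter, Finset.mem_Icc] at hmem
    obtain ⟨⟨hx1, hxn⟩, hxlt⟩ := hmem
    have hb' : ∀ i, gridH x (t+1) i ≤ k := by
      intro i
      rw [gridH_succ]
      split
      · exact max_le (hb i) hxlt
      · exact hb i
    refine ⟨hb', ?_, ?_⟩
    · have h1 := h (t+1) le_rfl
      rw [FullAt] at h1
      push_neg at h1
      obtain ⟨i, hi, hik⟩ := h1
      exact ⟨i, by
        rw [activeCols, Finset.mem_filter]
        exact ⟨hi, lt_of_le_of_ne (hb' i) hik⟩⟩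
    · have hstrict : ∑ i ∈ Finset.Icc 1 n, gridH x t i <
          ∑ i ∈ Finset.Icc 1 n, gridH x (t+1) i := by
        apply Finset.sum_lt_sum (fun i _ => gridH_le_succ x t i)
        refine ⟨x (t+1), Finset.mem_Icc.mpr ⟨hx1, hxn⟩, ?_⟩
        rw [gridH_succ, if_pos le_rfl]
        omega
      omega

lemma good_terminates {n k : ℕ} {x : ℕ → ℕ} (hn : 1 ≤ n) (hg : Good n k x) :
    ∃ t ≤ n * k, FullAt n k x t := by
  by_contra hcon
  push_neg at hcon
  obtain ⟨hb, hne, hS⟩ := good_invariant hn hg (n*k) (fun t' ht' => hcon t' ht')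
  obtain ⟨i0, hi0⟩ := hne
  rw [activeCols, Finset.mem_filter] at hi0
  have hlt : ∑ i ∈ Finset.Icc 1 n, gridH x (n*k) i < ∑ _i ∈ Finset.Icc 1 n, k :=
    Finset.sum_lt_sum (fun i _ => hb i) ⟨i0, hi0.1, hi0.2⟩
  rw [Finset.sum_const, Nat.card_Icc] at hlt
  simp at hlt
  omega

lemma good_sInf_mem {n k : ℕ} {x : ℕ → ℕ} (hn : 1 ≤ n) (hg : Good n k x) :
    sInf {t | FullAt n k x t} ≤ n * k ∧ FullAt n k x (sInf {t | FullAt n k x t}) := by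
  obtain ⟨t0, ht0, hfull⟩ := good_terminates hn hg
  exact ⟨le_trans (Nat.sInf_le hfull) ht0, Nat.sInf_mem (⟨t0, by exact hfull⟩ : Set.Nonempty {t | FullAt n k x t})⟩

/-- on a good path that fills by time `M`, there is a length-`k` chain of times
`≤ M`, strictly increasing, with nonincreasing selected values in `[1,n]`, and at each
chain time the previous height of column 1 is `< k`. -/
lemma good_chain {n k : ℕ} {x : ℕ → ℕ} (hn : 1 ≤ n) (hg : Good n k x) {M : ℕ}
    (hT : sInf {t | FullAt n k x t} ≤ M) :
    ∃ l : List ℕ, l.length = k ∧ l.Chain' (· < ·) ∧ l.Chain' (fun a b => x b ≤ x a) ∧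
      ∀ a ∈ l, 1 ≤ a ∧ a ≤ M ∧ 1 ≤ x a ∧ x a ≤ n ∧ gridH x (a-1) 1 < k := by
  set T := sInf {t | FullAt n k x t} with hTdef
  have hfull : FullAt n k x T := (good_sInf_mem hn hg).2
  have hT1 : gridH x T 1 = k := hfull 1 (Finset.mem_Icc.mpr ⟨le_rfl, hn⟩)
  have hTU : T ∈ {t | k ≤ gridH x t 1} := by rw [Set.mem_setOf_eq, hT1]
  set τ := sInf {t | k ≤ gridH x t 1} with hτdef
  have hτle : τ ≤ T := Nat.sInf_le hTU
  have hτ : k ≤ gridH x τ 1 := Nat.sInf_mem (⟨T, hTU⟩ : Set.Nonempty _)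
  have hlt : ∀ t' < τ, gridH x t' 1 < k := by
    intro t' ht'
    by_contra hge
    exact Nat.notMem_of_lt_sInf ht' (by rw [Set.mem_setOf_eq]; omega)
  obtain ⟨l, hlen, hch, hval, hmem⟩ := gridH_chain x τ k 1 hτ
  refine ⟨l, hlen, hch, hval, ?_⟩
  intro a ha
  obtain ⟨ha1, haτ, hxa1⟩ := hmem a ha
  have hgl : gridH x (a-1) 1 < k := hlt (a-1) (by omega)
  have hact : (1 : ℕ) ∈ activeCols n k x (a-1) := by
    rw [activeCols, Finset.mem_filter, Finset.mem_Icc]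
    exact ⟨⟨le_rfl, hn⟩, hgl⟩
  have := hg (a-1) ⟨1, hact⟩
  rw [activeCols, Finset.mem_filter, Finset.mem_Icc] at this
  have haa : a - 1 + 1 = a := by omega
  rw [haa] at this
  exact ⟨ha1, haτ.trans (hτle.trans hT), this.1.1, this.1.2, hgl⟩


/-! ### probability machinery -/

def hist (t : ℕ) (x : ℕ → ℕ) : ℕ → ℕ := fun s => if 1 ≤ s ∧ s ≤ t then x s else 0

lemma hist_in_range (t : ℕ) (x : ℕ → ℕ) {s : ℕ} (h1 : 1 ≤ s) (h2 : s ≤ t) :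
    hist t x s = x s := if_pos ⟨h1, h2⟩

lemma hist_idem (t : ℕ) (x : ℕ → ℕ) : hist t (hist t x) = hist t x := by
  funext s
  unfold hist
  split <;> rfl

lemma countable_hist_fixed (t : ℕ) : Set.Countable {y : ℕ → ℕ | hist t y = y} := by
  rw [← Set.countable_coe_iff]
  refine Function.Injective.countable
    (f := (fun y => (fun s : Fin (t+1) => y.1 s) : _ → (Fin (t+1) → ℕ))) ?_
  rintro ⟨y1, hy1⟩ ⟨y2, hy2⟩ h
  ext s
  rcases Nat.lt_or_ge s (t+1) with hs | hs
  · exact congrFun h ⟨s, hs⟩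
  · show y1 s = y2 s
    have e1 : y1 s = 0 := by
      rw [← hy1]; unfold hist; rw [if_neg (by omega)]
    have e2 : y2 s = 0 := by
      rw [← hy2]; unfold hist; rw [if_neg (by omega)]
    rw [e1, e2]

section Prob

variable {Ω : Type} [MeasureSpace Ω] [IsProbabilityMeasure (ℙ : Measure Ω)]
variable {n k : ℕ} {X : ℕ → Ω → ℕ}

lemma measurable_hist (hX : ∀ t, Measurable (X t)) (t : ℕ) :
    Measurable (fun ω => hist t (fun s => X s ω)) := by
  apply measurable_pi_lambda
  intro s
  simp only [hist]
  split
  · exact hX s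
  · exact measurable_const

lemma cyl_eq (t : ℕ) {y : ℕ → ℕ} (hy : hist t y = y) :
    (fun ω => hist t (fun s => X s ω)) ⁻¹' {y} =
      {ω | ∀ s, 1 ≤ s → s ≤ t → X s ω = y s} := by
  ext ω
  simp only [Set.mem_preimage, Set.mem_singleton_iff, Set.mem_setOf_eq]
  constructor
  · intro h s h1 h2
    rw [← congrFun h s, hist_in_range t _ h1 h2]
  · intro h
    funext s
    by_cases hs : 1 ≤ s ∧ s ≤ t
    · rw [hist_in_range t _ hs.1 hs.2, h s hs.1 hs.2]
    · unfold hist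
      rw [if_neg hs, ← congrFun hy s]
      unfold hist
      rw [if_neg hs]

/-- key single-step bound: conditionally on any history in which column 1 is not yet
full, any prescribed next selection has probability at most `1/n`. -/
lemma step_bound (hn : 1 ≤ n) (hX : IsGridProcess n k X)
    (t : ℕ) (Q : (ℕ → ℕ) → Prop) (hQ : ∀ y, Q y → gridH y t 1 < k) (v : ℕ) :
    ℙ {ω | Q (hist t (fun s => X s ω)) ∧ X (t+1) ω = v}
      ≤ (n : ENNReal)⁻¹ * ℙ {ω | Q (hist t (fun s => X s ω))} := by
  classical
  set Φ : Ω → (ℕ → ℕ) := fun ω => hist t (fun s => X s ω) with hΦ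
  have hΦm : Measurable Φ := measurable_hist hX.1 t
  set D : Set (ℕ → ℕ) := {y | hist t y = y ∧ Q y} with hD
  have hDc : D.Countable := (countable_hist_fixed t).mono (fun y hy => hy.1)
  haveI : Countable D := hDc.to_subtype
  have hA : {ω | Q (Φ ω)} = ⋃ y : D, Φ ⁻¹' {(y : ℕ → ℕ)} := by
    ext ω
    simp only [Set.mem_setOf_eq, Set.mem_iUnion, Set.mem_preimage, Set.mem_singleton_iff]
    constructor
    · intro h
      exact ⟨⟨Φ ω, hist_idem t _, h⟩, rfl⟩
    · rintro ⟨⟨y, hy1, hy2⟩, rfl⟩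
      exact hy2
  have hmeas : ∀ y : ℕ → ℕ, MeasurableSet (Φ ⁻¹' {y}) :=
    fun y => hΦm (measurableSet_singleton y)
  have hbound : ∀ y : D, ℙ (Φ ⁻¹' {(y : ℕ → ℕ)} ∩ {ω | X (t+1) ω = v})
      ≤ (n : ENNReal)⁻¹ * ℙ (Φ ⁻¹' {(y : ℕ → ℕ)}) := by
    rintro ⟨y, hy1, hy2⟩
    by_cases h0 : ℙ (Φ ⁻¹' {y}) = 0
    · rw [measure_mono_null Set.inter_subset_left h0]
      exact zero_le
    · have hcylE := cyl_eq (X := X) t hy1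
      have hact1 : (1 : ℕ) ∈ activeCols n k y t := by
        rw [activeCols, Finset.mem_filter, Finset.mem_Icc]
        exact ⟨⟨le_rfl, hn⟩, hQ y hy2⟩
      have hcond := hX.2 t y (by rw [← hcylE]; exact h0) ⟨1, hact1⟩ v
      have hfull : activeCols n k y t = Finset.Icc 1 n := by
        rw [activeCols]
        apply Finset.filter_true_of_mem
        intro i hi
        rw [Finset.mem_Icc] at hi
        exact lt_of_le_of_lt (gridH_anti y t hi.1) (hQ y hy2)
      have hcard : (activeCols n k y t).card = n := by
        rw [hfull, Nat.card_Icc]; omega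
      have hcle : (ℙ[{ω | X (t+1) ω = v}|{ω | ∀ s, 1 ≤ s → s ≤ t → X s ω = y s}])
          ≤ (n : ENNReal)⁻¹ := by
        rw [hcond, hcard]
        split
        · exact le_rfl
        · exact zero_le
      rw [ProbabilityTheory.cond_apply (by rw [← hcylE]; exact hmeas y)] at hcle
      rw [hcylE]
      calc ℙ ({ω | ∀ s, 1 ≤ s → s ≤ t → X s ω = y s} ∩ {ω | X (t+1) ω = v})
          = ℙ {ω | ∀ s, 1 ≤ s → s ≤ t → X s ω = y s} *
            ((ℙ {ω | ∀ s, 1 ≤ s → s ≤ t → X s ω = y s})⁻¹ *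
              ℙ ({ω | ∀ s, 1 ≤ s → s ≤ t → X s ω = y s} ∩ {ω | X (t+1) ω = v})) := by
            rw [← mul_assoc, ENNReal.mul_inv_cancel (by rw [← hcylE]; exact h0)
              (measure_ne_top _ _), one_mul]
        _ ≤ ℙ {ω | ∀ s, 1 ≤ s → s ≤ t → X s ω = y s} * (n : ENNReal)⁻¹ :=
            mul_le_mul_right hcle _
        _ = (n : ENNReal)⁻¹ * ℙ {ω | ∀ s, 1 ≤ s → s ≤ t → X s ω = y s} := mul_comm _ _
  have hsub : {ω | Q (Φ ω) ∧ X (t+1) ω = v} ⊆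
      ⋃ y : D, (Φ ⁻¹' {(y : ℕ → ℕ)} ∩ {ω | X (t+1) ω = v}) := by
    intro ω ⟨h1, h2⟩
    have : ω ∈ {ω | Q (Φ ω)} := h1
    rw [hA] at this
    obtain ⟨s, ⟨y, rfl⟩, hs⟩ := this
    exact Set.mem_iUnion.mpr ⟨y, hs, h2⟩
  calc ℙ {ω | Q (Φ ω) ∧ X (t+1) ω = v}
      ≤ ∑' y : D, ℙ (Φ ⁻¹' {(y : ℕ → ℕ)} ∩ {ω | X (t+1) ω = v}) :=
        le_trans (measure_mono hsub) (measure_iUnion_le _)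
    _ ≤ ∑' y : D, (n : ENNReal)⁻¹ * ℙ (Φ ⁻¹' {(y : ℕ → ℕ)}) := ENNReal.tsum_le_tsum hbound
    _ = (n : ENNReal)⁻¹ * ∑' y : D, ℙ (Φ ⁻¹' {(y : ℕ → ℕ)}) := ENNReal.tsum_mul_left
    _ = (n : ENNReal)⁻¹ * ℙ {ω | Q (Φ ω)} := by
        rw [hA, measure_iUnion ?_ (fun y => hmeas _)]
        intro y1 y2 hne
        simp only [Set.disjoint_left]
        intro ω h1 h2
        apply hne
        apply Subtype.ext
        rw [Set.mem_preimage, Set.mem_singleton_iff] at h1 h2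
        rw [← h1, ← h2]

/-- peeling bound: a prescribed strictly-increasing chain of selections, each made
while column 1 was not full, has probability at most `n⁻ᵏ`. -/
lemma chain_prob_bound (hn : 1 ≤ n) (hX : IsGridProcess n k X) {kk : ℕ}
    (f : Fin kk → ℕ × ℕ) (hmono : StrictMono (fun i => (f i).1)) (h1 : ∀ i, 1 ≤ (f i).1) :
    ∀ r, r ≤ kk → ℙ {ω | (∀ i : Fin kk, (i : ℕ) < r → X (f i).1 ω = (f i).2) ∧
        (∀ i : Fin kk, (i : ℕ) < r → gridH (fun s => X s ω) ((f i).1 - 1) 1 < k)}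
      ≤ ((n : ENNReal)⁻¹) ^ r := by
  intro r
  induction r with
  | zero => intro _; simpa using prob_le_one
  | succ r ihr =>
    intro hr1
    have hrkk : r < kk := hr1
    set ir : Fin kk := ⟨r, hrkk⟩ with hir
    set t : ℕ := (f ir).1 - 1 with ht
    have htt : (f ir).1 = t + 1 := by have := h1 ir; omega
    set Q : (ℕ → ℕ) → Prop := fun y =>
      (∀ i : Fin kk, (i : ℕ) < r → y (f i).1 = (f i).2) ∧
      (∀ i : Fin kk, (i : ℕ) ≤ r → gridH y ((f i).1 - 1) 1 < k) with hQdef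
    have hQ : ∀ y, Q y → gridH y t 1 < k := fun y hy => hy.2 ir le_rfl
    have hfle : ∀ i : Fin kk, (i : ℕ) < r → (f i).1 ≤ t := by
      intro i hi
      have : (f i).1 < (f ir).1 := hmono (show i < ir from hi)
      omega
    have hfle' : ∀ i : Fin kk, (i : ℕ) ≤ r → (f i).1 - 1 ≤ t := by
      intro i hi
      have : (f i).1 ≤ (f ir).1 := hmono.monotone (show i ≤ ir from hi)
      omega
    have hsub1 : {ω | (∀ i : Fin kk, (i : ℕ) < r + 1 → X (f i).1 ω = (f i).2) ∧
        (∀ i : Fin kk, (i : ℕ) < r + 1 → gridH (fun s => X s ω) ((f i).1 - 1) 1 < k)}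
        ⊆ {ω | Q (hist t (fun s => X s ω)) ∧ X (t+1) ω = (f ir).2} := by
      rintro ω ⟨he, hgrid⟩
      refine ⟨⟨?_, ?_⟩, ?_⟩
      · intro i hi
        rw [hist_in_range t _ (h1 i) (hfle i hi)]
        exact he i (by omega)
      · intro i hi
        rw [gridH_congr ((f i).1 - 1)
          (fun s hs1 hs2 => hist_in_range t _ hs1 (hs2.trans (hfle' i hi))) 1]
        exact hgrid i (by omega)
      · rw [← htt]
        exact he ir (by simp [hir])
    have hsub2 : {ω | Q (hist t (fun s => X s ω))} ⊆
        {ω | (∀ i : Fin kk, (i : ℕ) < r → X (f i).1 ω = (f i).2) ∧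
          (∀ i : Fin kk, (i : ℕ) < r → gridH (fun s => X s ω) ((f i).1 - 1) 1 < k)} := by
      rintro ω ⟨hq1, hq2⟩
      constructor
      · intro i hi
        rw [← hist_in_range t (fun s => X s ω) (h1 i) (hfle i hi)]
        exact hq1 i hi
      · intro i hi
        have h := hq2 i (le_of_lt hi)
        rwa [gridH_congr ((f i).1 - 1) (fun s hs1 hs2 => hist_in_range t (fun u => X u ω)
          hs1 (hs2.trans (hfle' i (le_of_lt hi)))) 1] at h
    calc ℙ {ω | (∀ i : Fin kk, (i : ℕ) < r + 1 → X (f i).1 ω = (f i).2) ∧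
          (∀ i : Fin kk, (i : ℕ) < r + 1 → gridH (fun s => X s ω) ((f i).1 - 1) 1 < k)}
        ≤ ℙ {ω | Q (hist t (fun s => X s ω)) ∧ X (t+1) ω = (f ir).2} := measure_mono hsub1
      _ ≤ (n : ENNReal)⁻¹ * ℙ {ω | Q (hist t (fun s => X s ω))} :=
          step_bound hn hX t Q hQ (f ir).2
      _ ≤ (n : ENNReal)⁻¹ * ((n : ENNReal)⁻¹) ^ r :=
          mul_le_mul_right (le_trans (measure_mono hsub2) (ihr (le_of_lt hr1))) _
      _ = ((n : ENNReal)⁻¹) ^ (r + 1) := (pow_succ' _ _).symm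

/-- almost surely, the process always selects an active column when one exists. -/
lemma good_null (hX : IsGridProcess n k X) :
    ℙ {ω | ¬ Good n k (fun s => X s ω)} = 0 := by
  classical
  have hsub : {ω | ¬ Good n k (fun s => X s ω)} ⊆
      ⋃ t : ℕ, {ω | (activeCols n k (fun s => X s ω) t).Nonempty ∧
        X (t+1) ω ∉ activeCols n k (fun s => X s ω) t} := by
    intro ω hω
    rw [Set.mem_setOf_eq, Good] at hω
    push_neg at hω
    obtain ⟨t, h1, h2⟩ := hω
    exact Set.mem_iUnion.mpr ⟨t, h1, h2⟩
  apply measure_mono_null hsub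
  apply measure_iUnion_null
  intro t
  set Φ : Ω → (ℕ → ℕ) := fun ω => hist t (fun s => X s ω) with hΦ
  have hΦm : Measurable Φ := measurable_hist hX.1 t
  set D : Set (ℕ → ℕ) := {y | hist t y = y ∧ (activeCols n k y t).Nonempty} with hD
  have hDc : D.Countable := (countable_hist_fixed t).mono (fun y hy => hy.1)
  haveI : Countable D := hDc.to_subtype
  have hsub2 : {ω | (activeCols n k (fun s => X s ω) t).Nonempty ∧
      X (t+1) ω ∉ activeCols n k (fun s => X s ω) t} ⊆
      ⋃ y : D, (Φ ⁻¹' {(y : ℕ → ℕ)} ∩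
        {ω | X (t+1) ω ∉ activeCols n k (y : ℕ → ℕ) t}) := by
    intro ω ⟨h1, h2⟩
    have hagree : ∀ s, 1 ≤ s → s ≤ t → X s ω = Φ ω s :=
      fun s hs1 hs2 => (hist_in_range t (fun u => X u ω) hs1 hs2).symm
    have hAC : activeCols n k (fun s => X s ω) t = activeCols n k (Φ ω) t :=
      activeCols_congr hagree
    refine Set.mem_iUnion.mpr ⟨⟨Φ ω, hist_idem t _, ?_⟩, rfl, ?_⟩
    · rw [← hAC]; exact h1
    · rw [← hAC]; exact h2
  apply measure_mono_null hsub2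
  apply measure_iUnion_null
  rintro ⟨y, hy1, hy2⟩
  by_cases h0 : ℙ (Φ ⁻¹' {y}) = 0
  · exact measure_mono_null Set.inter_subset_left h0
  · have hcylE := cyl_eq (X := X) t hy1
    have hcond := hX.2 t y (by rw [← hcylE]; exact h0) hy2
    have hsub3 : (Φ ⁻¹' {y} ∩ {ω | X (t+1) ω ∉ activeCols n k y t}) ⊆
        ⋃ j : {j : ℕ // j ∉ activeCols n k y t},
          (Φ ⁻¹' {y} ∩ {ω | X (t+1) ω = (j : ℕ)}) := by
      intro ω ⟨hω1, hω2⟩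
      exact Set.mem_iUnion.mpr ⟨⟨X (t+1) ω, hω2⟩, hω1, rfl⟩
    apply measure_mono_null hsub3
    apply measure_iUnion_null
    rintro ⟨j, hj⟩
    have hc := hcond j
    rw [if_neg hj] at hc
    rw [ProbabilityTheory.cond_apply (by rw [← hcylE]; exact hΦm (measurableSet_singleton y))]
      at hc
    rcases mul_eq_zero.mp hc with h | h
    · exact absurd (ENNReal.inv_eq_zero.mp h) (by rw [← hcylE]; exact measure_ne_top _ _)
    · rw [hcylE]; exact h

end Prob

/-! ### counting -/

lemma lowerset_eq_of_card {κ : Type*} [LinearOrder κ] {A B : Finset κ}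
    (hA : ∀ a b, a ≤ b → b ∈ A → a ∈ A) (hB : ∀ a b, a ≤ b → b ∈ B → a ∈ B)
    (hcard : A.card = B.card) : A = B := by
  by_cases hAB : A ⊆ B
  · exact Finset.eq_of_subset_of_card_le hAB hcard.ge
  · obtain ⟨a, haA, haB⟩ := Finset.not_subset.mp hAB
    have hBA : B ⊆ A := by
      intro b hb
      rcases le_total b a with h | h
      · exact hA b a h haA
      · exact absurd (hB a b h hb) haB
    exact (Finset.eq_of_subset_of_card_le hBA hcard.le).symm

lemma antitone_eq_of_counts {kk nn : ℕ} {v w : Fin kk → Fin nn}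
    (hv : Antitone v) (hw : Antitone w)
    (h : ∀ j : Fin nn, (Finset.univ.filter fun i => j ≤ v i).card =
      (Finset.univ.filter fun i => j ≤ w i).card) : v = w := by
  classical
  have key : ∀ (v w : Fin kk → Fin nn), Antitone v → Antitone w →
      (∀ j : Fin nn, (Finset.univ.filter fun i => j ≤ v i).card =
        (Finset.univ.filter fun i => j ≤ w i).card) →
      ∀ i, ¬ (v i < w i) := by
    intro v w hv hw h i hlt
    set j := w i with hj
    have hAB : (Finset.univ.filter fun i => j ≤ v i) =
        (Finset.univ.filter fun i => j ≤ w i) := by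
      apply lowerset_eq_of_card
      · intro a b hab hb
        rw [Finset.mem_filter] at hb ⊢
        exact ⟨Finset.mem_univ _, hb.2.trans (hv hab)⟩
      · intro a b hab hb
        rw [Finset.mem_filter] at hb ⊢
        exact ⟨Finset.mem_univ _, hb.2.trans (hw hab)⟩
      · exact h j
    have hiB : i ∈ Finset.univ.filter fun i => j ≤ w i := by
      rw [Finset.mem_filter]; exact ⟨Finset.mem_univ _, le_rfl⟩
    rw [← hAB, Finset.mem_filter] at hiB
    exact absurd hiB.2 (not_le.mpr hlt)
  funext i
  rcases lt_trichotomy (v i) (w i) with hlt | he | hlt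
  · exact absurd hlt (key v w hv hw h i)
  · exact he
  · exact absurd hlt (key w v hw hv (fun j => (h j).symm) i)

lemma strictmono_eq_of_image {kk : ℕ} {α : Type*} [LinearOrder α] [DecidableEq α] [Fintype α]
    {f g : Fin kk → α} (hf : StrictMono f) (hg : StrictMono g)
    (h : Finset.univ.image f = Finset.univ.image g) : f = g := by
  have hcard : (Finset.univ.image f).card = kk := by
    rw [Finset.card_image_of_injective _ hf.injective, Finset.card_univ, Fintype.card_fin]
  have h1 : f = (Finset.univ.image f).orderEmbOfFin hcard :=
    Finset.orderEmbOfFin_unique hcard (fun x => Finset.mem_image_of_mem f (Finset.mem_univ x)) hf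
  have h2 : g = (Finset.univ.image f).orderEmbOfFin hcard :=
    Finset.orderEmbOfFin_unique hcard
      (fun x => h ▸ Finset.mem_image_of_mem g (Finset.mem_univ x)) hg
  rw [h1, h2]

lemma card_I_le {kk m nn : ℕ} (I : Finset (Fin kk → Fin m × Fin nn))
    (hI : ∀ f ∈ I, StrictMono (fun i => (f i).1) ∧ Antitone (fun i => (f i).2)) :
    I.card ≤ m.choose kk * (kk+1) ^ nn := by
  classical
  set e : (Fin kk → Fin m × Fin nn) → Finset (Fin m) × (Fin nn → Fin (kk+1)) :=
    fun f => (Finset.univ.image (fun i => (f i).1),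
      fun j => ⟨(Finset.univ.filter fun i => j ≤ (f i).2).card,
        Nat.lt_succ_of_le (le_trans (Finset.card_filter_le _ _)
          (by rw [Finset.card_univ, Fintype.card_fin]))⟩) with he
  have hinj : Set.InjOn e I := by
    intro f hf g hg hfg
    obtain ⟨hf1, hf2⟩ := hI f hf
    obtain ⟨hg1, hg2⟩ := hI g hg
    have h1 : (fun i => (f i).1) = (fun i => (g i).1) :=
      strictmono_eq_of_image hf1 hg1 (congrArg Prod.fst hfg)
    have h2 : (fun i => (f i).2) = (fun i => (g i).2) := by
      apply antitone_eq_of_counts hf2 hg2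
      intro j
      have h3 := congrFun (congrArg Prod.snd hfg) j
      exact congrArg Fin.val h3
    funext i
    exact Prod.ext (congrFun h1 i) (congrFun h2 i)
  have hmaps : ∀ f ∈ I, e f ∈
      (Finset.univ : Finset (Fin m)).powersetCard kk ×ˢ
        (Finset.univ : Finset (Fin nn → Fin (kk+1))) := by
    intro f hf
    rw [Finset.mem_product]
    constructor
    · rw [Finset.mem_powersetCard]
      exact ⟨Finset.subset_univ _,
        by rw [Finset.card_image_of_injective _ (hI f hf).1.injective, Finset.card_univ,
          Fintype.card_fin]⟩
    · exact Finset.mem_univ _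
  calc I.card ≤ ((Finset.univ : Finset (Fin m)).powersetCard kk ×ˢ
      (Finset.univ : Finset (Fin nn → Fin (kk+1)))).card :=
        Finset.card_le_card_of_injOn e hmaps hinj
    _ = m.choose kk * (kk+1) ^ nn := by
        rw [Finset.card_product, Finset.card_powersetCard, Finset.card_univ, Finset.card_univ,
          Fintype.card_fin, Fintype.card_fun, Fintype.card_fin, Fintype.card_fin]

/-! ### analysis -/

lemma pow_self_le_exp_mul_factorial :
    ∀ kk : ℕ, (kk : ℝ) ^ kk ≤ Real.exp 1 ^ kk * (Nat.factorial kk) := by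
  intro kk
  induction kk with
  | zero => simp
  | succ m ih =>
    have hexp1 : (1 : ℝ) ≤ Real.exp 1 := by
      have := Real.add_one_le_exp (1 : ℝ)
      linarith
    rcases Nat.eq_zero_or_pos m with rfl | hm
    · simpa using hexp1
    · have hmR : (0 : ℝ) < m := by exact_mod_cast hm
      have key : ((m : ℝ) + 1) ^ m ≤ Real.exp 1 * (m : ℝ) ^ m := by
        have h1 : (1 : ℝ) + 1 / m ≤ Real.exp (1 / m) := by
          have := Real.add_one_le_exp (1 / (m : ℝ))
          linarith
        have h2 : ((1 : ℝ) + 1 / m) ^ m ≤ Real.exp (1 / m) ^ m := by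
          apply pow_le_pow_left₀ (by positivity) h1
        have h3 : Real.exp (1 / m) ^ m = Real.exp 1 := by
          rw [← Real.exp_nat_mul]
          congr 1
          field_simp
        have h4 : ((m : ℝ) + 1) ^ m = ((1 : ℝ) + 1 / m) ^ m * (m : ℝ) ^ m := by
          rw [← mul_pow]
          congr 1
          field_simp
        rw [h4]
        rw [h3] at h2
        exact mul_le_mul_of_nonneg_right h2 (by positivity)
      have hfac : (Nat.factorial (m+1) : ℝ) = (m + 1 : ℝ) * Nat.factorial m := by
        rw [Nat.factorial_succ]; push_cast; ring
      calc ((m + 1 : ℕ) : ℝ) ^ (m + 1) = ((m : ℝ) + 1) ^ m * ((m : ℝ) + 1) := by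
            push_cast; ring
        _ ≤ (Real.exp 1 * (m : ℝ) ^ m) * ((m : ℝ) + 1) := by
            apply mul_le_mul_of_nonneg_right key (by positivity)
        _ ≤ (Real.exp 1 * (Real.exp 1 ^ m * Nat.factorial m)) * ((m : ℝ) + 1) := by
            apply mul_le_mul_of_nonneg_right _ (by positivity)
            exact mul_le_mul_of_nonneg_left ih (by positivity)
        _ = Real.exp 1 ^ (m + 1) * (Nat.factorial (m+1) : ℝ) := by
            rw [hfac]; ring

lemma choose_bound {m kk n : ℕ} (hk : 1 ≤ kk) (hn : 1 ≤ n)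
    (hm : Real.exp 1 * m ≤ (kk : ℝ) * n / 2) :
    (m.choose kk : ℝ) * (1 / n) ^ kk ≤ (1 / 2) ^ kk := by
  have hkR : (0 : ℝ) < kk := by exact_mod_cast hk
  have hnR : (0 : ℝ) < n := by exact_mod_cast hn
  have hfac : (0 : ℝ) < Nat.factorial kk := by exact_mod_cast (Nat.factorial_pos kk)
  have h1 : (m.choose kk : ℝ) ≤ (m : ℝ) ^ kk / Nat.factorial kk := by
    have h := Nat.choose_le_pow_div (α := ℝ) kk m
    have e : ((m : ℝ) ^ kk : ℝ) = ((m ^ kk : ℕ) : ℝ) := by push_cast; ring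
    rw [e]
    exact_mod_cast h
  have h2 : (1 : ℝ) / Nat.factorial kk ≤ Real.exp 1 ^ kk / (kk : ℝ) ^ kk := by
    rw [div_le_div_iff₀ hfac (by positivity)]
    have := pow_self_le_exp_mul_factorial kk
    linarith
  have h3 : (m.choose kk : ℝ) * (1 / n) ^ kk ≤
      (Real.exp 1 * m / ((kk : ℝ) * n)) ^ kk := by
    have e1 : (Real.exp 1 * m / ((kk : ℝ) * n)) ^ kk =
        ((m : ℝ) ^ kk * (Real.exp 1 ^ kk / (kk : ℝ) ^ kk)) * (1 / n) ^ kk := by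
      rw [div_pow, mul_pow, mul_pow, div_pow, one_pow]
      field_simp
    rw [e1]
    apply mul_le_mul_of_nonneg_right _ (by positivity)
    calc (m.choose kk : ℝ) ≤ (m : ℝ) ^ kk / Nat.factorial kk := h1
      _ = (m : ℝ) ^ kk * ((1 : ℝ) / Nat.factorial kk) := by ring
      _ ≤ (m : ℝ) ^ kk * (Real.exp 1 ^ kk / (kk : ℝ) ^ kk) :=
          mul_le_mul_of_nonneg_left h2 (by positivity)
  refine h3.trans (pow_le_pow_left₀ (by positivity) ?_ kk)
  rw [div_le_iff₀ (by positivity)]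
  calc Real.exp 1 * m ≤ (kk : ℝ) * n / 2 := hm
    _ = 1 / 2 * ((kk : ℝ) * n) := by ring

section Main

variable {Ω : Type} [MeasureSpace Ω] [IsProbabilityMeasure (ℙ : Measure Ω)]

lemma main_bound {n k : ℕ} (hn : 1 ≤ n) (hk : 24 ≤ k) {X : ℕ → Ω → ℕ}
    (hX : IsGridProcess n k X) :
    1 - ((k : ℝ) + 1) ^ (n + 1) * (1 / 2) ^ k ≤
      (ℙ {ω | 1/8 * (k : ℝ) * (n : ℝ) ≤ (fillTime n k X ω : ℝ) ∧
        (fillTime n k X ω : ℝ) ≤ 1 * (k : ℝ) * (n : ℝ)}).toReal := by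
  classical
  set m : ℕ := n * k / 8 + 1 with hm
  have hm1 : 1 ≤ m := Nat.le_add_left 1 _
  set I : Finset (Fin k → Fin m × Fin (n+1)) :=
    Finset.univ.filter (fun f => StrictMono (fun i => ((f i).1 : ℕ)) ∧
      Antitone (fun i => ((f i).2 : ℕ)) ∧ ∀ i, 1 ≤ ((f i).1 : ℕ)) with hI
  set B : (Fin k → Fin m × Fin (n+1)) → Set Ω := fun f =>
    {ω | (∀ i, X ((f i).1 : ℕ) ω = ((f i).2 : ℕ)) ∧
      ∀ i, gridH (fun s => X s ω) (((f i).1 : ℕ) - 1) 1 < k} with hB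
  set bad : Set Ω := ⋃ f ∈ I, B f with hbad
  have hBf : ∀ f ∈ I, ℙ (B f) ≤ ((n : ENNReal)⁻¹) ^ k := by
    intro f hf
    rw [hI, Finset.mem_filter] at hf
    obtain ⟨-, hf1, hf2, hf3⟩ := hf
    have hb := chain_prob_bound hn hX (kk := k)
      (fun i => (((f i).1 : ℕ), ((f i).2 : ℕ))) hf1 hf3 k le_rfl
    refine le_trans (measure_mono ?_) hb
    rintro ω ⟨h1, h2⟩
    exact ⟨fun i _ => h1 i, fun i _ => h2 i⟩
  have hbadle : ℙ bad ≤ (I.card : ENNReal) * ((n : ENNReal)⁻¹) ^ k := by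
    calc ℙ bad ≤ ∑ f ∈ I, ℙ (B f) := measure_biUnion_finset_le I B
      _ ≤ ∑ _f ∈ I, ((n : ENNReal)⁻¹) ^ k := Finset.sum_le_sum hBf
      _ = (I.card : ENNReal) * ((n : ENNReal)⁻¹) ^ k := by
          rw [Finset.sum_const, nsmul_eq_mul]
  have hincl : {ω | Good n k (fun s => X s ω)} ∩ badᶜ ⊆
      {ω | 1/8 * (k:ℝ) * (n:ℝ) ≤ (fillTime n k X ω : ℝ) ∧
        (fillTime n k X ω : ℝ) ≤ 1 * (k:ℝ) * (n:ℝ)} := by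
    rintro ω ⟨hg, hnb⟩
    rw [Set.mem_setOf_eq] at hg
    have hfT : fillTime n k X ω = sInf {t | FullAt n k (fun s => X s ω) t} := rfl
    have hTnk := (good_sInf_mem hn hg).1
    have hTm : ¬ (sInf {t | FullAt n k (fun s => X s ω) t} ≤ m - 1) := by
      intro hT
      obtain ⟨l, hlen, hch, hval, hmem⟩ := good_chain hn hg hT
      have hkl : ∀ (i : Fin k), (i : ℕ) < l.length := by
        rw [hlen]; exact fun i => i.isLt
      have hprop : ∀ i : Fin k, 1 ≤ l.get ⟨i, hkl i⟩ ∧ l.get ⟨i, hkl i⟩ ≤ m - 1 ∧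
          1 ≤ X (l.get ⟨i, hkl i⟩) ω ∧ X (l.get ⟨i, hkl i⟩) ω ≤ n ∧
          gridH (fun s => X s ω) (l.get ⟨i, hkl i⟩ - 1) 1 < k :=
        fun i => hmem _ (l.get_mem _)
      set f : Fin k → Fin m × Fin (n+1) := fun i =>
        (⟨l.get ⟨i, hkl i⟩, by have := (hprop i).2.1; omega⟩,
         ⟨X (l.get ⟨i, hkl i⟩) ω, by have := (hprop i).2.2.2.1; omega⟩) with hf
      haveI : IsTrans ℕ (fun a b => X b ω ≤ X a ω) := ⟨fun a b c h1 h2 => le_trans h2 h1⟩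
      haveI : IsTrans ℕ (· < · : ℕ → ℕ → Prop) := ⟨fun a b c => Nat.lt_trans⟩
      have hpairlt := List.pairwise_iff_get.mp (List.isChain_iff_pairwise.mp hch)
      have hpairle := List.pairwise_iff_get.mp (List.isChain_iff_pairwise.mp hval)
      have hfI : f ∈ I := by
        rw [hI, Finset.mem_filter]
        refine ⟨Finset.mem_univ _, ?_, ?_, fun i => (hprop i).1⟩
        · intro i j hij
          exact hpairlt ⟨i, hkl i⟩ ⟨j, hkl j⟩ hij
        · intro i j hij
          rcases eq_or_lt_of_le hij with h | h
          · rw [h]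
          · exact hpairle ⟨i, hkl i⟩ ⟨j, hkl j⟩ h
      apply hnb
      rw [hbad]
      refine Set.mem_iUnion₂.mpr ⟨f, hfI, ?_, ?_⟩
      · intro i; rfl
      · intro i; exact (hprop i).2.2.2.2
    have hTge : m ≤ fillTime n k X ω := by rw [hfT]; omega
    have h8 : n * k < 8 * m := by
      have hdm := Nat.div_add_mod (n * k) 8
      omega
    constructor
    · have hlt : n * k < 8 * fillTime n k X ω := by omega
      have hcast : (n : ℝ) * k ≤ 8 * (fillTime n k X ω : ℝ) := by exact_mod_cast hlt.le
      have hcomm : (k : ℝ) * n = (n : ℝ) * k := mul_comm _ _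
      linarith
    · have hle : fillTime n k X ω ≤ n * k := by rw [hfT]; exact hTnk
      have hcast : (fillTime n k X ω : ℝ) ≤ (n : ℝ) * k := by exact_mod_cast hle
      have hcomm : (k : ℝ) * n = (n : ℝ) * k := mul_comm _ _
      linarith
  -- measure arithmetic
  have hGnull : ℙ ({ω | Good n k (fun s => X s ω)}ᶜ) = 0 := by
    have h := good_null hX
    have he : {ω | ¬ Good n k (fun s => X s ω)} = {ω | Good n k (fun s => X s ω)}ᶜ := by
      ext ω; simp
    rwa [he] at h
  set E : Set Ω := {ω | 1/8 * (k:ℝ) * (n:ℝ) ≤ (fillTime n k X ω : ℝ) ∧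
    (fillTime n k X ω : ℝ) ≤ 1 * (k:ℝ) * (n:ℝ)} with hE
  have hmain : (1 : ENNReal) ≤ ℙ E + ℙ bad := by
    have huniv : (Set.univ : Set Ω) ⊆ ({ω | Good n k (fun s => X s ω)} ∩ badᶜ) ∪
        ({ω | Good n k (fun s => X s ω)}ᶜ ∪ bad) := by
      intro ω _
      by_cases h1 : Good n k (fun s => X s ω)
      · by_cases h2 : ω ∈ bad
        · exact Or.inr (Or.inr h2)
        · exact Or.inl ⟨h1, h2⟩
      · exact Or.inr (Or.inl h1)
    calc (1 : ENNReal) = ℙ (Set.univ) := measure_univ.symm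
      _ ≤ ℙ (({ω | Good n k (fun s => X s ω)} ∩ badᶜ) ∪
          ({ω | Good n k (fun s => X s ω)}ᶜ ∪ bad)) := measure_mono huniv
      _ ≤ ℙ ({ω | Good n k (fun s => X s ω)} ∩ badᶜ) +
          ℙ ({ω | Good n k (fun s => X s ω)}ᶜ ∪ bad) := measure_union_le _ _
      _ ≤ ℙ E + ℙ bad := by
          apply add_le_add (measure_mono hincl)
          calc ℙ ({ω | Good n k (fun s => X s ω)}ᶜ ∪ bad)
              ≤ ℙ ({ω | Good n k (fun s => X s ω)}ᶜ) + ℙ bad := measure_union_le _ _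
            _ = ℙ bad := by rw [hGnull, zero_add]
  have hfin1 : ℙ E ≠ ⊤ := measure_ne_top _ _
  have hfin2 : ℙ bad ≠ ⊤ := measure_ne_top _ _
  have hreal : 1 ≤ (ℙ E).toReal + (ℙ bad).toReal := by
    have h := ENNReal.toReal_mono (ENNReal.add_ne_top.mpr ⟨hfin1, hfin2⟩) hmain
    rwa [ENNReal.toReal_one, ENNReal.toReal_add hfin1 hfin2] at h
  have hnne : (n : ENNReal) ≠ 0 := by
    exact_mod_cast Nat.one_le_iff_ne_zero.mp hn
  have hrhsfin : (I.card : ENNReal) * ((n : ENNReal)⁻¹) ^ k ≠ ⊤ :=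
    ENNReal.mul_ne_top (ENNReal.natCast_ne_top _)
      (ENNReal.pow_ne_top (ENNReal.inv_ne_top.mpr hnne))
  have h1 : (ℙ bad).toReal ≤ (I.card : ℝ) * ((n : ℝ)⁻¹) ^ k := by
    have h := ENNReal.toReal_mono hrhsfin hbadle
    rwa [ENNReal.toReal_mul, ENNReal.toReal_pow, ENNReal.toReal_inv,
      ENNReal.toReal_natCast, ENNReal.toReal_natCast] at h
  have hcardle : (I.card : ℝ) ≤ (m.choose k : ℝ) * ((k : ℝ) + 1) ^ (n+1) := by
    have hc := card_I_le I (fun f hf => by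
      rw [hI, Finset.mem_filter] at hf
      obtain ⟨-, h1, h2, -⟩ := hf
      exact ⟨fun i j hij => h1 hij, fun i j hij => h2 hij⟩)
    calc (I.card : ℝ) ≤ ((m.choose k * (k+1) ^ (n+1) : ℕ) : ℝ) := by exact_mod_cast hc
      _ = (m.choose k : ℝ) * ((k : ℝ) + 1) ^ (n+1) := by push_cast; ring
  have hmle : Real.exp 1 * m ≤ (k : ℝ) * n / 2 := by
    have hd : ((n * k / 8 : ℕ) : ℝ) ≤ ((n * k : ℕ) : ℝ) / 8 := Nat.cast_div_le
    have hm' : (m : ℝ) ≤ (n : ℝ) * k / 8 + 1 := by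
      rw [hm]
      push_cast
      push_cast at hd
      linarith
    have h24 : (24 : ℝ) ≤ (n : ℝ) * k := by
      have h24n : 24 ≤ n * k := le_trans hk (Nat.le_mul_of_pos_left k hn)
      exact_mod_cast h24n
    have hm6 : (m : ℝ) ≤ (n : ℝ) * k / 6 := by linarith
    have hexp : Real.exp 1 < 2.7182818286 := Real.exp_one_lt_d9
    have hmnn : (0 : ℝ) ≤ (m : ℝ) := Nat.cast_nonneg m
    have h3 : Real.exp 1 * m ≤ 3 * ((n : ℝ) * k / 6) := by
      apply mul_le_mul (by linarith) hm6 hmnn (by norm_num)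
    have hcomm : (k : ℝ) * n = (n : ℝ) * k := mul_comm _ _
    linarith
  have hchoose : (m.choose k : ℝ) * (1 / n) ^ k ≤ (1 / 2) ^ k :=
    choose_bound (le_trans (by norm_num) hk) hn hmle
  have hbadreal : (ℙ bad).toReal ≤ ((k : ℝ) + 1) ^ (n+1) * (1 / 2) ^ k := by
    calc (ℙ bad).toReal ≤ (I.card : ℝ) * ((n : ℝ)⁻¹) ^ k := h1
      _ ≤ ((m.choose k : ℝ) * ((k : ℝ) + 1) ^ (n+1)) * ((n : ℝ)⁻¹) ^ k :=
          mul_le_mul_of_nonneg_right hcardle (by positivity)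
      _ = ((m.choose k : ℝ) * (1 / n) ^ k) * ((k : ℝ) + 1) ^ (n+1) := by
          rw [one_div]; ring
      _ ≤ (1 / 2) ^ k * ((k : ℝ) + 1) ^ (n+1) :=
          mul_le_mul_of_nonneg_right hchoose (by positivity)
      _ = ((k : ℝ) + 1) ^ (n+1) * (1 / 2) ^ k := by ring
  linarith

end Main

end CD

/-- There are universal constants `0 < c_L < c_U` such that for every fixed
integer `n ≥ 1`, `P( c_L·k·n ≤ T(n,k) ≤ c_U·k·n ) → 1` as `k → ∞`. -/
theorem cd_fill_time_fixed_n :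
    ∃ cL cU : ℝ, 0 < cL ∧ cL < cU ∧
      ∀ n : ℕ, 1 ≤ n →
      ∀ (Ω : Type) (_ : MeasureSpace Ω) (_ : IsProbabilityMeasure (ℙ : Measure Ω))
        (X : ℕ → ℕ → Ω → ℕ), (∀ k, IsGridProcess n k (X k)) →
        Tendsto
          (fun (k : ℕ) => (ℙ {ω |
              cL * (k : ℝ) * (n : ℝ) ≤ (fillTime n k (X k) ω : ℝ) ∧
              (fillTime n k (X k) ω : ℝ) ≤ cU * (k : ℝ) * (n : ℝ)}).toReal)
          atTop (nhds 1) := by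
  refine ⟨1/8, 1, by norm_num, by norm_num, ?_⟩
  intro n hn Ω mΩ hprob X hX
  have hsum : Summable (fun j : ℕ => (j : ℝ) ^ (n+1) * (1/2 : ℝ) ^ j) := by
    apply summable_pow_mul_geometric_of_norm_lt_one (n+1)
    rw [Real.norm_eq_abs, abs_of_pos] <;> norm_num
  have h0 : Tendsto (fun j : ℕ => (j : ℝ) ^ (n+1) * (1/2 : ℝ) ^ j) atTop (nhds 0) :=
    hsum.tendsto_atTop_zero
  have h1 : Tendsto (fun k : ℕ => ((k : ℝ) + 1) ^ (n+1) * (1/2 : ℝ) ^ k) atTop (nhds 0) := by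
    have h2 : Tendsto (fun k : ℕ => (((k+1) : ℕ) : ℝ) ^ (n+1) * (1/2 : ℝ) ^ (k+1))
        atTop (nhds 0) := h0.comp (tendsto_add_atTop_nat 1)
    have h3 := h2.const_mul (2 : ℝ)
    rw [mul_zero] at h3
    convert h3 using 2 with k
    push_cast
    ring
  have hlowlim : Tendsto (fun k : ℕ => 1 - ((k : ℝ) + 1) ^ (n+1) * (1/2 : ℝ) ^ k)
      atTop (nhds 1) := by
    have h4 := h1.const_sub (1 : ℝ)
    rwa [sub_zero] at h4
  apply tendsto_of_tendsto_of_tendsto_of_le_of_le' hlowlim tendsto_const_nhds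
  · exact Filter.eventually_atTop.mpr ⟨24, fun k hk => CD.main_bound hn hk (hX k)⟩
  · apply Filter.Eventually.of_forall
    intro k
    have h5 : ℙ {ω | 1/8 * (k : ℝ) * (n : ℝ) ≤ (fillTime n k (X k) ω : ℝ) ∧
        (fillTime n k (X k) ω : ℝ) ≤ 1 * (k : ℝ) * (n : ℝ)} ≤ 1 := prob_le_one
    have h6 := ENNReal.toReal_mono ENNReal.one_ne_top h5
    rwa [ENNReal.toReal_one] at h6
end

section
/- Let X = X_1 + ... + X_k be a sum of k i.i.d. geometric random variables with success probability p ∈ (0,1] (each X_i supported on {1,2,3,...} with P(X_i = m) = (1−p)^{m−1} p), so that E[X] = k/p. Then, with H(x) = x·ln x − x + 1: (1) for every real t ≥ E[X], P( X ≥ t ) ≤ exp( − (k·t / E[X]) · H( E[X] / t ) ); and (2) for every real t with 0 < t ≤ E[X], P( X ≤ t ) ≤ exp( − (k·t / E[X]) · H( E[X] / t ) ). -/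
open MeasureTheory ProbabilityTheory Filter

/-- The Cramér-type rate function `H(x) = x·ln x − x + 1`. -/
noncomputable def Hrate (x : ℝ) : ℝ := x * Real.log x - x + 1

section Aux

lemma geom_pow_integral {Ω : Type*} [MeasureSpace Ω] [IsProbabilityMeasure (ℙ : Measure Ω)]
    {p : ℝ} (hp0 : 0 < p) {X : Ω → ℕ} (hX : Measurable X)
    (hgeo : ∀ m, 1 ≤ m → (ℙ {ω | X ω = m}).toReal = (1 - p) ^ (m - 1) * p)
    (hzero : ℙ {ω | X ω = 0} = 0)
    {s : ℝ} (hs : 0 < s) (hq0 : 0 ≤ 1 - p) (hqs : (1 - p) * s < 1) :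
    Integrable (fun ω => s ^ X ω) ℙ ∧
      ∫ ω, s ^ X ω ∂ℙ = p * s / (1 - (1 - p) * s) := by
  have hq : (1:ℝ) - p = 1 - p := rfl
  have hqs0 : 0 ≤ (1 - p) * s := mul_nonneg hq0 hs.le
  have hden : 0 < 1 - (1 - p) * s := by linarith
  set v : ℕ → ℝ := fun n => if n = 0 then 0 else s ^ n * ((1 - p) ^ (n - 1) * p) with hv
  have hvnn : ∀ n, 0 ≤ v n := by
    intro n
    cases n with
    | zero => simp [hv]
    | succ m =>
      simp only [hv, if_neg (Nat.succ_ne_zero m)]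
      positivity
  have hvsucc : (fun n => v (n + 1)) = fun n => (p * s) * ((1 - p) * s) ^ n := by
    funext n
    simp only [hv, if_neg (Nat.succ_ne_zero n), Nat.add_sub_cancel, mul_pow, pow_succ]
    ring
  have hsum : Summable v := by
    rw [← summable_nat_add_iff 1]
    rw [hvsucc]
    exact (summable_geometric_of_lt_one hqs0 hqs).mul_left _
  have hvsum : ∑' n, v n = p * s / (1 - (1 - p) * s) := by
    rw [Summable.tsum_eq_zero_add hsum]
    simp only [hv, if_pos rfl, zero_add]
    have : ∑' n, v (n + 1) = (p * s) * (1 - (1 - p) * s)⁻¹ := by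
      rw [hvsucc, tsum_mul_left, tsum_geometric_of_lt_one hqs0 hqs]
    simpa [hv, div_eq_mul_inv] using this
  have hmeasf : Measurable (fun ω => s ^ X ω) := by
    exact (measurable_from_top (f := fun n : ℕ => s ^ n)).comp hX
  have hmap : ∀ n : ℕ, (Measure.map X ℙ) {n} = ℙ {ω | X ω = n} := by
    intro n
    rw [Measure.map_apply hX (measurableSet_singleton n)]
    rfl
  have hterm : ∀ n : ℕ, ENNReal.ofReal (s ^ n) * (Measure.map X ℙ) {n} = ENNReal.ofReal (v n) := by
    intro n
    rw [hmap]
    cases n with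
    | zero => simp [hzero, hv]
    | succ m =>
      have h1 : ℙ {ω | X ω = m + 1} = ENNReal.ofReal ((1 - p) ^ m * p) := by
        have h2 := hgeo (m + 1) (Nat.le_add_left 1 m)
        rw [Nat.add_sub_cancel] at h2
        rw [← h2, ENNReal.ofReal_toReal (measure_ne_top _ _)]
      rw [h1, ← ENNReal.ofReal_mul (by positivity)]
      simp only [hv, if_neg (Nat.succ_ne_zero m), Nat.add_sub_cancel]
  have hL : ∫⁻ ω, ENNReal.ofReal (s ^ X ω) ∂ℙ = ENNReal.ofReal (p * s / (1 - (1 - p) * s)) := by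
    rw [← lintegral_map (f := fun n : ℕ => ENNReal.ofReal (s ^ n))
      (measurable_from_top (f := fun n : ℕ => s ^ n)).ennreal_ofReal hX,
      lintegral_countable' (fun n : ℕ => ENNReal.ofReal (s ^ n))]
    calc ∑' n : ℕ, ENNReal.ofReal (s ^ n) * (Measure.map X ℙ) {n}
        = ∑' n : ℕ, ENNReal.ofReal (v n) := by exact tsum_congr hterm
      _ = ENNReal.ofReal (∑' n, v n) := (ENNReal.ofReal_tsum_of_nonneg hvnn hsum).symm
      _ = ENNReal.ofReal (p * s / (1 - (1 - p) * s)) := by rw [hvsum]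
  have hnn : 0 ≤ᵐ[ℙ] fun ω => s ^ X ω := ae_of_all _ fun ω => by positivity
  constructor
  · refine ⟨hmeasf.aestronglyMeasurable, ?_⟩
    rw [hasFiniteIntegral_iff_ofReal hnn, hL]
    exact ENNReal.ofReal_lt_top
  · rw [integral_eq_lintegral_of_nonneg_ae hnn hmeasf.aestronglyMeasurable, hL,
      ENNReal.toReal_ofReal (by positivity)]


lemma exponent_bound (k : ℕ) {p t a s : ℝ} (hk : 1 ≤ k) (hp0 : 0 < p) (hp1 : p ≤ 1)
    (ht : 0 < t) (ha : a = p * t / k) (hs : s = a / (p + a * (1 - p))) :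
    Real.exp (-(Real.log s) * t) * a ^ k ≤
      Real.exp (-((k : ℝ) * t / ((k : ℝ) / p)) * Hrate (((k : ℝ) / p) / t)) := by
  have hk0 : (0 : ℝ) < k := by exact_mod_cast Nat.lt_of_lt_of_le Nat.zero_lt_one hk
  have ha0 : 0 < a := by rw [ha]; positivity
  have hq0 : 0 ≤ 1 - p := by linarith
  have hd : 0 < p + a * (1 - p) := by positivity
  have hs0 : 0 < s := by rw [hs]; positivity
  -- rewrite the RHS exponent
  have hpt : (k : ℝ) * t / ((k : ℝ) / p) = p * t := by
    field_simp
  have hx : ((k : ℝ) / p) / t = a⁻¹ := by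
    rw [ha]
    field_simp
  have hk2 : (k : ℝ) = p * t / a := by
    rw [ha]; field_simp
  have hE : -((k : ℝ) * t / ((k : ℝ) / p)) * Hrate (((k : ℝ) / p) / t) =
      (k : ℝ) * Real.log a + k - p * t := by
    rw [hpt, hx, Hrate, Real.log_inv, hk2]
    field_simp
    ring
  rw [hE]
  have hak : a ^ k = Real.exp ((k : ℝ) * Real.log a) := by
    rw [Real.exp_nat_mul, Real.exp_log ha0]
  rw [hak, ← Real.exp_add, Real.exp_le_exp]
  -- key log inequality
  have hls : Real.log s = Real.log a - Real.log (p + a * (1 - p)) := by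
    rw [hs, Real.log_div ha0.ne' hd.ne']
  have hlog2 : Real.log (p + a * (1 - p)) - Real.log a ≤ (p + a * (1 - p)) / a - 1 := by
    have h := Real.log_le_sub_one_of_pos (div_pos hd ha0)
    rwa [Real.log_div hd.ne' ha0.ne'] at h
  have hkey : (p + a * (1 - p)) / a = (k : ℝ) / t + 1 - p := by
    rw [hk2]
    field_simp
    ring
  have h5 : p - (k : ℝ) / t ≤ Real.log s := by
    rw [hls]
    rw [hkey] at hlog2
    linarith
  have h6 : t * (p - (k : ℝ) / t) ≤ t * Real.log s := by
    exact mul_le_mul_of_nonneg_left h5 ht.le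
  have h7 : t * ((k : ℝ) / t) = k := by field_simp
  nlinarith

end Aux

/-- Let `X = X₁ + ⋯ + X_k` be a sum of `k` i.i.d. geometric random
variables with success probability `p ∈ (0,1]` (supported on `{1,2,…}` with
`P(Xᵢ = m) = (1−p)^{m−1}·p`), so that `E[X] = k/p`. Then:
(1) for every `t ≥ E[X]`, `P(X ≥ t) ≤ exp(−(k·t/E[X])·H(E[X]/t))`; and
(2) for every `0 < t ≤ E[X]`, `P(X ≤ t) ≤ exp(−(k·t/E[X])·H(E[X]/t))`. -/
theorem chernoff_sum_geometrics
    (Ω : Type*) [MeasureSpace Ω] [IsProbabilityMeasure (ℙ : Measure Ω)]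
    (k : ℕ) (hk : 1 ≤ k) (p : ℝ) (hp0 : 0 < p) (hp1 : p ≤ 1)
    (X : Fin k → Ω → ℕ) (hmeas : ∀ i, Measurable (X i))
    (hindep : iIndepFun X ℙ)
    (hgeo : ∀ i m, 1 ≤ m →
      (ℙ {ω | X i ω = m}).toReal = (1 - p) ^ (m - 1) * p)
    (hzero : ∀ i, ℙ {ω | X i ω = 0} = 0) :
    (∀ t : ℝ, (k : ℝ) / p ≤ t →
      (ℙ {ω | t ≤ ((∑ i, X i ω : ℕ) : ℝ)}).toReal ≤
        Real.exp (-((k : ℝ) * t / ((k : ℝ) / p)) * Hrate (((k : ℝ) / p) / t))) ∧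
    (∀ t : ℝ, 0 < t → t ≤ (k : ℝ) / p →
      (ℙ {ω | ((∑ i, X i ω : ℕ) : ℝ) ≤ t}).toReal ≤
        Real.exp (-((k : ℝ) * t / ((k : ℝ) / p)) * Hrate (((k : ℝ) / p) / t))) := by
  have hk0 : (0 : ℝ) < k := by exact_mod_cast Nat.lt_of_lt_of_le Nat.zero_lt_one hk
  have hq0 : 0 ≤ 1 - p := by linarith
  set Y : Fin k → Ω → ℝ := fun i ω => (X i ω : ℝ) with hY
  have hYmeas : ∀ i, Measurable (Y i) :=
    fun i => (measurable_from_top (f := fun n : ℕ => (n : ℝ))).comp (hmeas i)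
  have hYindep : iIndepFun Y ℙ :=
    hindep.comp (fun _ n => (n : ℝ)) (fun _ => measurable_from_top)
  have hcast : ∀ ω, ((∑ i, X i ω : ℕ) : ℝ) = (∑ i, Y i) ω := by
    intro ω
    simp [hY, Finset.sum_apply]
  -- common core for both tails
  have core : ∀ t : ℝ, 0 < t →
      (let a := p * t / k; let s := a / (p + a * (1 - p));
        (0 < s ∧ (1 - p) * s < 1) ∧
        Integrable (fun ω => Real.exp (Real.log s * (∑ i, Y i) ω)) ℙ ∧
        mgf (∑ i, Y i) ℙ (Real.log s) = a ^ k) := by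
    intro t ht
    intro a s
    have ha0 : 0 < a := by positivity
    have hd : 0 < p + a * (1 - p) := by positivity
    have hs0 : 0 < s := by positivity
    have hqs : (1 - p) * s < 1 := by
      have h1 : (1 - p) * s = (1 - p) * a / (p + a * (1 - p)) := by
        show (1 - p) * (a / (p + a * (1 - p))) = _
        ring
      rw [h1, div_lt_one hd]
      nlinarith
    have hden2 : 0 < 1 - (1 - p) * s := by linarith
    have hM : p * s / (1 - (1 - p) * s) = a := by
      rw [div_eq_iff hden2.ne']
      show p * (a / (p + a * (1 - p))) = a * (1 - (1 - p) * (a / (p + a * (1 - p))))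
      field_simp
      ring
    have hconv : ∀ i, (fun ω => Real.exp (Real.log s * Y i ω)) = fun ω => s ^ X i ω := by
      intro i
      funext ω
      show Real.exp (Real.log s * (X i ω : ℝ)) = _
      rw [mul_comm, Real.exp_nat_mul, Real.exp_log hs0]
    have haux := fun i => geom_pow_integral hp0 (hmeas i) (hgeo i) (hzero i) hs0 hq0 hqs
    have hIi : ∀ i, Integrable (fun ω => Real.exp (Real.log s * Y i ω)) ℙ := by
      intro i; rw [hconv i]; exact (haux i).1
    refine ⟨⟨hs0, hqs⟩, ?_, ?_⟩
    · exact hYindep.integrable_exp_mul_sum hYmeas (fun i _ => hIi i)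
    · rw [hYindep.mgf_sum hYmeas Finset.univ]
      have : ∀ i : Fin k, mgf (Y i) ℙ (Real.log s) = a := by
        intro i
        rw [mgf, hconv i, (haux i).2, hM]
      rw [Finset.prod_congr rfl (fun i _ => this i), Finset.prod_const,
        Finset.card_univ, Fintype.card_fin]
  constructor
  · -- upper tail
    intro t ht'
    have ht : 0 < t := lt_of_lt_of_le (by positivity) ht'
    obtain ⟨⟨hs0, hqs⟩, hIS, hmgfS⟩ := core t ht
    set a := p * t / k with ha
    set s := a / (p + a * (1 - p)) with hsdef
    have ha1 : 1 ≤ a := by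
      rw [ha, le_div_iff₀ hk0]
      have := (div_le_iff₀ hp0).mp ht'
      linarith
    have hd : 0 < p + a * (1 - p) := by positivity
    have hs1 : 1 ≤ s := by
      rw [hsdef, le_div_iff₀ hd]
      nlinarith
    have hl0 : 0 ≤ Real.log s := Real.log_nonneg hs1
    have hsetEq : {ω | t ≤ ((∑ i, X i ω : ℕ) : ℝ)} = {ω | t ≤ (∑ i, Y i) ω} := by
      ext ω; simp only [Set.mem_setOf_eq, hcast ω]
    calc (ℙ {ω | t ≤ ((∑ i, X i ω : ℕ) : ℝ)}).toReal
        = (ℙ {ω | t ≤ (∑ i, Y i) ω}).toReal := by rw [hsetEq]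
      _ ≤ Real.exp (-(Real.log s) * t) * mgf (∑ i, Y i) ℙ (Real.log s) :=
          measure_ge_le_exp_mul_mgf t hl0 hIS
      _ = Real.exp (-(Real.log s) * t) * a ^ k := by rw [hmgfS]
      _ ≤ _ := exponent_bound k hk hp0 hp1 ht ha hsdef
  · -- lower tail
    intro t ht htle
    obtain ⟨⟨hs0, hqs⟩, hIS, hmgfS⟩ := core t ht
    set a := p * t / k with ha
    set s := a / (p + a * (1 - p)) with hsdef
    have ha1 : a ≤ 1 := by
      rw [ha, div_le_one hk0]
      have := (le_div_iff₀ hp0).mp htle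
      linarith
    have ha0 : 0 < a := by rw [ha]; positivity
    have hd : 0 < p + a * (1 - p) := by positivity
    have hs1 : s ≤ 1 := by
      rw [hsdef, div_le_one hd]
      nlinarith
    have hl0 : Real.log s ≤ 0 := Real.log_nonpos hs0.le hs1
    have hsetEq : {ω | ((∑ i, X i ω : ℕ) : ℝ) ≤ t} = {ω | (∑ i, Y i) ω ≤ t} := by
      ext ω; simp only [Set.mem_setOf_eq, hcast ω]
    calc (ℙ {ω | ((∑ i, X i ω : ℕ) : ℝ) ≤ t}).toReal
        = (ℙ {ω | (∑ i, Y i) ω ≤ t}).toReal := by rw [hsetEq]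
      _ ≤ Real.exp (-(Real.log s) * t) * mgf (∑ i, Y i) ℙ (Real.log s) :=
          measure_le_le_exp_mul_mgf t hl0 hIS
      _ = Real.exp (-(Real.log s) * t) * a ^ k := by rw [hmgfS]
      _ ≤ _ := exponent_bound k hk hp0 hp1 ht ha hsdef
end

section
/- Let k ≥ 1 be an integer, r > 0 a real number, and R_1 ≤ R_2 ≤ ... ≤ R_k real numbers. Then Σ_{i=1}^{k−1} (R_{i+1} − R_i)^2 / ( 2(r + R_k − R_1) ) + r^2 / ( 2(r + R_k − R_1) ) ≥ r / (√k + 1). -/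
lemma cd_telescope (R : ℕ → ℝ) :
    ∀ k, 1 ≤ k → ∑ i ∈ Finset.Ico 1 k, (R (i + 1) - R i) = R k - R 1 := by
  intro k hk
  induction k with
  | zero => omega
  | succ n ih =>
    rcases Nat.lt_or_ge 1 (n + 1) with h | h
    · have hn : 1 ≤ n := by omega
      rw [Finset.sum_Ico_succ_top hn, ih hn]; ring
    · have : n = 0 := by omega
      subst this; simp

/-- Let `k ≥ 1` be an integer, `r > 0` real, and `R_1 ≤ R_2 ≤ ⋯ ≤ R_k`
real numbers. Then
`Σ_{i=1}^{k−1} (R_{i+1} − R_i)² / (2(r + R_k − R_1)) + r² / (2(r + R_k − R_1)) ≥ r/(√k + 1)`. -/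
theorem cd_expected_progress_lower_bound
    (k : ℕ) (hk : 1 ≤ k) (r : ℝ) (hr : 0 < r)
    (R : ℕ → ℝ) (hmono : ∀ i, 1 ≤ i → i < k → R i ≤ R (i + 1)) :
    (∑ i ∈ Finset.Ico 1 k, (R (i + 1) - R i) ^ 2) / (2 * (r + R k - R 1)) +
        r ^ 2 / (2 * (r + R k - R 1)) ≥
      r / (Real.sqrt k + 1) := by
  set s := Real.sqrt k with hs
  have hs0 : (0:ℝ) ≤ (k:ℝ) := by positivity
  have hs2 : s ^ 2 = (k:ℝ) := Real.sq_sqrt hs0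
  have hs1 : (1:ℝ) ≤ s := by
    rw [hs, show (1:ℝ) = Real.sqrt 1 by simp]
    exact Real.sqrt_le_sqrt (by exact_mod_cast hk)
  set S := ∑ i ∈ Finset.Ico 1 k, (R (i + 1) - R i) ^ 2 with hS
  set D := R k - R 1 with hDdef
  have htel : ∑ i ∈ Finset.Ico 1 k, (R (i + 1) - R i) = D := cd_telescope R k hk
  have hD0 : 0 ≤ D := by
    rw [← htel]
    apply Finset.sum_nonneg
    intro i hi
    simp only [Finset.mem_Ico] at hi
    linarith [hmono i hi.1 hi.2]
  have hS0 : 0 ≤ S := Finset.sum_nonneg fun i _ => sq_nonneg _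
  have hCS : D ^ 2 ≤ ((k:ℝ) - 1) * S := by
    rw [← htel]
    have := sq_sum_le_card_mul_sum_sq (s := Finset.Ico 1 k)
      (f := fun i => R (i + 1) - R i)
    have hcard : (Finset.Ico 1 k).card = k - 1 := by
      rw [Nat.card_Ico]
    rw [hcard] at this
    calc (∑ i ∈ Finset.Ico 1 k, (R (i + 1) - R i)) ^ 2
        ≤ ((k - 1 : ℕ) : ℝ) * S := by exact_mod_cast this
      _ = ((k:ℝ) - 1) * S := by
          rw [Nat.cast_sub hk]; norm_num
  have hden : 0 < 2 * (r + R k - R 1) := by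
    have : r + R k - R 1 = r + D := by rw [hDdef]; ring
    rw [this]; linarith
  have hsp : 0 < s + 1 := by linarith
  rw [ge_iff_le, ← add_div, div_le_div_iff₀ hsp hden]
  have hrw : r + R k - R 1 = r + D := by rw [hDdef]; ring
  rw [hrw]
  -- key: (s²-1) * ((S + r²)(s+1) - 2r(r+D)) = (s+1)(S(s²-1) - D²) + (s+1)(D - r(s-1))²
  rcases eq_or_lt_of_le hs1 with h1 | h1
  · -- s = 1, so k = 1, D = 0
    have hk1 : (k:ℝ) = 1 := by rw [← hs2, ← h1]; norm_num
    have hD : D = 0 := by nlinarith [hCS]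
    rw [← h1, hD]
    nlinarith
  · have key : 0 ≤ (s + 1) * (((k:ℝ) - 1) * S - D ^ 2) := by
      apply mul_nonneg (le_of_lt hsp); linarith
    have key2 : 0 ≤ (s + 1) * (D - r * (s - 1)) ^ 2 := by positivity
    have hfac : (s ^ 2 - 1) > 0 := by nlinarith
    nlinarith [key, key2, hs2, mul_pos hfac hr]
end
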